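/- arXiv:2301.02507 — 14 statements merged into one kernel-verified Lean document; each statement's English description precedes it below -/
import Mathlib

section
/- A connected graph G with at least one edge satisfies dem(G) = 1 if and only if G is a tree. -/
open SimpleGraph

variable {V : Type*}

/-- Edge `e` is monitored by vertex `x` in `G`: some distance from `x` changes
when `e` is removed. -/
def monitors (G : SimpleGraph V) (x : V) (e : Sym2 V) : Prop :=
  ∃ y : V, G.edist x y ≠ (G.deleteEdges {e}).edist x y

/-- `M` is a distance-edge-monitoring set of `G`. -/
def IsDEMSet (G : SimpleGraph V) (M : Set V) : Prop :=
  ∀ e ∈ G.edgeSet, ∃ x ∈ M, monitors G x e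

/-- The distance-edge-monitoring number of `G`. -/
noncomputable def dem (G : SimpleGraph V) : ℕ :=
  sInf {n | ∃ M : Set V, M.ncard = n ∧ IsDEMSet G M}

namespace DEMProof

open SimpleGraph Walk

variable {G : SimpleGraph V} {x u v w y : V}

lemma edist_coe (h : G.Reachable u v) : G.edist u v = (G.dist u v : ℕ∞) := by
  rw [SimpleGraph.dist, ENat.coe_toNat (edist_ne_top_iff_reachable.2 h)]

lemma edist_delete_le_of_walk {e : Sym2 V} (p : G.Walk x y) (hp : e ∉ p.edges) :
    (G.deleteEdges {e}).edist x y ≤ p.length := by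
  have h' : ∀ f ∈ p.edges, f ∉ ({e} : Set (Sym2 V)) := by
    intro f hf hfe
    exact hp (by rwa [Set.mem_singleton_iff.1 hfe] at hf)
  have := edist_le (p.toDeleteEdges {e} h')
  rwa [Walk.length_transfer] at this

lemma start_edge_cases {p : G.Walk v y} (hp : p.IsPath) (he : s(v, u) ∈ p.edges) :
    ∃ (h : G.Adj v u) (q : G.Walk u y), p = Walk.cons h q := by
  cases p with
  | nil => simp at he
  | @cons _ b _ h q =>
    rw [Walk.edges_cons, List.mem_cons] at he
    rcases he with he | he
    · obtain rfl : u = b := Sym2.congr_right.mp he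
      exact ⟨h, q, rfl⟩
    · rw [Walk.cons_isPath_iff] at hp
      exact absurd (q.fst_mem_support_of_mem_edges he) hp.2

lemma exists_shortest_avoiding (hG : G.Connected) (hadj : G.Adj u v)
    (hne : G.dist x v ≠ G.dist x u + 1) :
    ∃ p : G.Walk x v, p.length = G.dist x v ∧ s(u, v) ∉ p.edges := by
  obtain ⟨p, hp, hlen⟩ := (hG x v).exists_path_of_dist
  by_cases hmem : s(u, v) ∈ p.edges
  · exfalso
    have hrev : s(v, u) ∈ p.reverse.edges := by
      rw [Walk.edges_reverse, List.mem_reverse, Sym2.eq_swap]; exact hmem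
    obtain ⟨h, q, hq⟩ := start_edge_cases hp.reverse hrev
    have hlq : q.length + 1 = G.dist x v := by
      have h2 := congrArg Walk.length hq
      rw [Walk.length_reverse, Walk.length_cons] at h2
      omega
    have h1 : G.dist x u ≤ q.length := by
      have := dist_le q.reverse
      rwa [Walk.length_reverse] at this
    have h2 : G.dist x v ≤ G.dist x u + 1 := by
      have ht := hG.dist_triangle (u := x) (v := u) (w := v)
      have h3 : G.dist u v = 1 := dist_eq_one_iff_adj.mpr hadj
      omega
    omega
  · exact ⟨p, hlen, hmem⟩

lemma edist_delete_eq (hG : G.Connected)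
    (hu : (G.deleteEdges {s(u, v)}).edist x u ≤ G.edist x u)
    (hv : (G.deleteEdges {s(u, v)}).edist x v ≤ G.edist x v) (y : V) :
    (G.deleteEdges {s(u, v)}).edist x y ≤ G.edist x y := by
  suffices h : ∀ (n : ℕ) (y : V), G.dist x y ≤ n →
      (G.deleteEdges {s(u, v)}).edist x y ≤ G.edist x y from h (G.dist x y) y le_rfl
  intro n
  induction n with
  | zero =>
    intro y hy
    obtain rfl : x = y := (hG x y).dist_eq_zero_iff.mp (Nat.le_zero.mp hy)
    simp [edist_self]
  | succ n ih =>
    intro y hy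
    by_cases hyu : y = u; · subst hyu; exact hu
    by_cases hyv : y = v; · subst hyv; exact hv
    rcases Nat.lt_or_ge (G.dist x y) (n + 1) with hlt | hge
    · exact ih y (by omega)
    have hdist : G.dist x y = n + 1 := le_antisymm hy hge
    obtain ⟨p, hp, hlen⟩ := (hG x y).exists_path_of_dist
    have hnn : ¬ p.reverse.Nil := by
      rw [Walk.not_nil_iff_lt_length, Walk.length_reverse]; omega
    obtain ⟨z, hadj, q, hq⟩ := Walk.not_nil_iff.mp hnn
    have hzdist : G.dist x z ≤ n := by
      have h1 := dist_le q.reverse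
      have h2 := congrArg Walk.length hq
      rw [Walk.length_reverse, Walk.length_cons] at h2
      rw [Walk.length_reverse] at h1
      omega
    have hze : s(y, z) ≠ s(u, v) := by
      intro hcontra
      rw [Sym2.eq_iff] at hcontra
      rcases hcontra with ⟨h1, h2⟩ | ⟨h1, h2⟩
      · exact hyu h1
      · exact hyv h1
    have hadj' : (G.deleteEdges {s(u, v)}).Adj z y := by
      rw [deleteEdges_adj]
      refine ⟨hadj.symm, ?_⟩
      rw [Set.mem_singleton_iff, Sym2.eq_swap]
      exact hze
    calc (G.deleteEdges {s(u, v)}).edist x y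
        ≤ (G.deleteEdges {s(u, v)}).edist x z + (G.deleteEdges {s(u, v)}).edist z y :=
          SimpleGraph.edist_triangle
      _ ≤ G.edist x z + 1 :=
          add_le_add (ih z hzdist) (le_of_eq (edist_eq_one_iff_adj.mpr hadj'))
      _ = (G.dist x z : ℕ∞) + 1 := by rw [edist_coe (hG x z)]
      _ ≤ (G.dist x y : ℕ∞) := by
          exact_mod_cast (by omega : G.dist x z + 1 ≤ G.dist x y)
      _ = G.edist x y := (edist_coe (hG x y)).symm

lemma not_monitors (hG : G.Connected)
    (hu : (G.deleteEdges {s(u, v)}).edist x u ≤ G.edist x u)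
    (hv : (G.deleteEdges {s(u, v)}).edist x v ≤ G.edist x v) :
    ¬ monitors G x s(u, v) := by
  rintro ⟨y, hy⟩
  exact hy (le_antisymm (edist_anti (G.deleteEdges_le _)) (edist_delete_eq hG hu hv y))

/-- The sum of the distances from `x` to the two endpoints of an edge. -/
noncomputable def distSum (G : SimpleGraph V) (x : V) : Sym2 V → ℕ :=
  Sym2.lift ⟨fun a b => G.dist x a + G.dist x b, fun a b => add_comm _ _⟩

lemma cycle_aux (hG : G.Connected) {a : V} {c : G.Walk a a} (hc : c.IsCycle)
    (hec : s(u, v) ∈ c.edges)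
    (hmax : ∀ e' ∈ c.edges, distSum G x e' ≤ G.dist x u + G.dist x v)
    (huv : G.dist x u ≤ G.dist x v) :
    ¬ monitors G x s(u, v) := by
  classical
  have hadj : G.Adj u v := G.mem_edgeSet.mp (c.edges_subset_edgeSet hec)
  have htri : G.dist x v ≤ G.dist x u + 1 := by
    have h1 := hG.dist_triangle (u := x) (v := u) (w := v)
    have h2 : G.dist u v = 1 := dist_eq_one_iff_adj.mpr hadj
    omega
  have hu' : (G.deleteEdges {s(u, v)}).edist x u ≤ G.edist x u := by
    obtain ⟨p, hlen, hpe⟩ :=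
      exists_shortest_avoiding (x := x) (u := v) (v := u) hG hadj.symm (by omega)
    rw [Sym2.eq_swap] at hpe
    have := edist_delete_le_of_walk p hpe
    rw [edist_coe (hG x u)]
    exact le_trans this (by exact_mod_cast hlen.le)
  have hv' : (G.deleteEdges {s(u, v)}).edist x v ≤ G.edist x v := by
    rcases (by omega : G.dist x v = G.dist x u ∨ G.dist x v = G.dist x u + 1) with hcase | hcase
    · obtain ⟨p, hlen, hpe⟩ := exists_shortest_avoiding (x := x) hG hadj (by omega)
      have := edist_delete_le_of_walk p hpe
      rw [edist_coe (hG x v)]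
      exact le_trans this (by exact_mod_cast hlen.le)
    · -- find the other neighbor of `v` on the cycle
      have hvs : v ∈ c.support := c.snd_mem_support_of_mem_edges hec
      have hc' : (c.rotate v hvs).IsCycle := hc.rotate hvs
      have hrot : (c.rotate v hvs).edges ~r c.edges := c.rotate_edges v hvs
      have h3 : 3 ≤ (c.rotate v hvs).length := hc'.three_le_length
      have hnn : ¬ (c.rotate v hvs).Nil := by
        rw [Walk.not_nil_iff_lt_length]; omega
      obtain ⟨w1, h1, q, hq⟩ := Walk.not_nil_iff.mp hnn
      have hqlen : q.length + 1 = (c.rotate v hvs).length := by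
        have := congrArg Walk.length hq
        rw [Walk.length_cons] at this
        omega
      have hnodup : (c.rotate v hvs).edges.Nodup := hc'.isCircuit.isTrail.edges_nodup
      have hnodup' : s(v, w1) ∉ q.edges := by
        rw [hq, Walk.edges_cons, List.nodup_cons] at hnodup
        exact hnodup.1
      have hec' : s(u, v) ∈ (c.rotate v hvs).edges := hrot.perm.mem_iff.mpr hec
      rw [hq, Walk.edges_cons, List.mem_cons] at hec'
      obtain ⟨w, hvw, hwc', hwne⟩ :
          ∃ w, G.Adj v w ∧ s(v, w) ∈ (c.rotate v hvs).edges ∧ s(v, w) ≠ s(u, v) := by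
        rcases hec' with heq | hqe
        · -- s(u,v) is the first edge; take the last edge
          have hqnn : ¬ q.reverse.Nil := by
            rw [Walk.not_nil_iff_lt_length, Walk.length_reverse]; omega
          obtain ⟨w, h2, q2, hq2⟩ := Walk.not_nil_iff.mp hqnn
          have hwq : s(v, w) ∈ q.edges := by
            have : s(v, w) ∈ q.reverse.edges := by
              rw [hq2, Walk.edges_cons]; exact List.mem_cons_self
            rwa [Walk.edges_reverse, List.mem_reverse] at this
          refine ⟨w, h2, ?_, ?_⟩
          · rw [hq, Walk.edges_cons]; exact List.mem_cons_of_mem _ hwq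
          · intro hcontra
            rw [heq] at hcontra
            exact hnodup' (hcontra ▸ hwq)
        · -- s(u,v) is in the tail; take the first edge
          refine ⟨w1, h1, ?_, ?_⟩
          · rw [hq, Walk.edges_cons]; exact List.mem_cons_self
          · intro hcontra
            exact hnodup' (hcontra ▸ hqe)
      have hwc : s(v, w) ∈ c.edges := hrot.perm.mem_iff.mp hwc'
      have hsum : G.dist x v + G.dist x w ≤ G.dist x u + G.dist x v := by
        have := hmax _ hwc
        simpa [distSum] using this
      have htw : G.dist x v ≤ G.dist x w + 1 := by
        have h1' := hG.dist_triangle (u := x) (v := w) (w := v)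
        have h2' : G.dist w v = 1 := dist_eq_one_iff_adj.mpr hvw.symm
        omega
      have hwdist : G.dist x w + 1 = G.dist x v := by omega
      obtain ⟨q0, hq0p, hq0len⟩ := (hG x w).exists_path_of_dist
      have hq0e : s(u, v) ∉ q0.edges := by
        intro hmem
        have hvsup : v ∈ q0.support := q0.snd_mem_support_of_mem_edges hmem
        have hle : G.dist x v ≤ q0.length :=
          le_trans (dist_le (q0.takeUntil v hvsup)) (q0.length_takeUntil_le hvsup)
        omega
      have hp2e : s(u, v) ∉ (q0.concat hvw.symm).edges := by
        rw [Walk.edges_concat, List.concat_eq_append]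
        intro hmem
        rcases List.mem_append.mp hmem with hmem | hmem
        · exact hq0e hmem
        · rw [List.mem_singleton] at hmem
          rw [hmem] at hwne
          exact hwne (by rw [Sym2.eq_swap])
      have := edist_delete_le_of_walk (q0.concat hvw.symm) hp2e
      rw [edist_coe (hG x v)]
      refine this.trans ?_
      rw [Walk.length_concat]
      exact_mod_cast (by omega : q0.length + 1 ≤ G.dist x v)
  exact not_monitors hG hu' hv'

end DEMProof

theorem stmt2 [Fintype V] (G : SimpleGraph V) (hG : G.Connected)
    (he : G.edgeSet.Nonempty) : dem G = 1 ↔ G.IsTree := by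
  classical
  constructor
  · intro hdem
    refine ⟨hG, ?_⟩
    have hSne : {n | ∃ M : Set V, M.ncard = n ∧ IsDEMSet G M}.Nonempty := by
      by_contra h
      rw [Set.not_nonempty_iff_eq_empty] at h
      rw [dem, h, Nat.sInf_empty] at hdem
      exact absurd hdem (by norm_num)
    have hmem : 1 ∈ {n | ∃ M : Set V, M.ncard = n ∧ IsDEMSet G M} := by
      rw [← hdem]; exact Nat.sInf_mem hSne
    obtain ⟨M, hM1, hMdem⟩ := hmem
    obtain ⟨x, rfl⟩ := Set.ncard_eq_one.mp hM1
    have hmon : ∀ e ∈ G.edgeSet, monitors G x e := by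
      intro e he'
      obtain ⟨x', hx', hm⟩ := hMdem e he'
      rwa [Set.mem_singleton_iff.mp hx'] at hm
    intro a c hc
    have hne : c.edges ≠ [] := by
      have h3 := hc.three_le_length
      intro h
      rw [← Walk.length_edges, h] at h3
      simp at h3
    obtain ⟨e, hec, hmax⟩ := (c.edges.toFinset).exists_max_image (DEMProof.distSum G x)
      (by rwa [List.toFinset_nonempty_iff])
    rw [List.mem_toFinset] at hec
    have hmax' : ∀ e' ∈ c.edges, DEMProof.distSum G x e' ≤ DEMProof.distSum G x e := by
      intro e' he'
      exact hmax e' (List.mem_toFinset.mpr he')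
    clear hmax
    revert hec hmax'
    induction e using Sym2.ind with | _ u v => ?_
    intro hec hmax'
    have hmon' := hmon _ (c.edges_subset_edgeSet hec)
    rcases le_total (G.dist x u) (G.dist x v) with h | h
    · exact DEMProof.cycle_aux hG hc hec
        (fun e' he' => by simpa [DEMProof.distSum] using hmax' e' he') h hmon'
    · rw [Sym2.eq_swap] at hec hmon'
      exact DEMProof.cycle_aux hG hc hec
        (fun e' he' => by
          have := hmax' e' he'
          simpa [DEMProof.distSum, add_comm] using this) h hmon'
  · intro htree
    obtain ⟨x⟩ := hG.nonempty
    have hbridge := isAcyclic_iff_forall_adj_isBridge.mp htree.2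
    have hdem1 : IsDEMSet G {x} := by
      intro e he'
      refine ⟨x, Set.mem_singleton x, ?_⟩
      revert he'
      induction e using Sym2.ind with | _ u v => ?_
      intro he'
      have hb := hbridge (G.mem_edgeSet.mp he')
      rw [isBridge_iff] at hb
      have hnr : ¬ (G.deleteEdges {s(u, v)}).Reachable u v := hb
      by_cases hru : (G.deleteEdges {s(u, v)}).Reachable x u
      · have hrv : ¬ (G.deleteEdges {s(u, v)}).Reachable x v :=
          fun h => hnr (hru.symm.trans h)
        refine ⟨v, ?_⟩
        rw [edist_eq_top_of_not_reachable hrv]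
        exact edist_ne_top_iff_reachable.2 (hG x v)
      · refine ⟨u, ?_⟩
        rw [edist_eq_top_of_not_reachable hru]
        exact edist_ne_top_iff_reachable.2 (hG x u)
    have h1mem : 1 ∈ {n | ∃ M : Set V, M.ncard = n ∧ IsDEMSet G M} :=
      ⟨{x}, Set.ncard_singleton x, hdem1⟩
    refine le_antisymm (Nat.sInf_le h1mem) (le_csInf ⟨1, h1mem⟩ ?_)
    rintro n ⟨M, hMn, hMdem⟩
    rcases Nat.eq_zero_or_pos n with h | h
    swap
    · exact h
    subst h
    have hM0 : M = ∅ := Set.ncard_eq_zero (Set.toFinite M) |>.mp hMn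
    obtain ⟨e0, he0⟩ := he
    obtain ⟨x', hx', _⟩ := hMdem e0 he0
    rw [hM0] at hx'
    exact absurd hx' (Set.notMem_empty x')
end

section
/- A connected graph G of order n satisfies dem(G) = n-1 if and only if G is the complete graph K_n. -/
open SimpleGraph

variable {V : Type*}

/-- A vertex monitors every edge incident to it. -/
lemma monitors_of_adj (G : SimpleGraph V) {x y : V} (h : G.Adj x y) :
    monitors G x s(x, y) := by
  refine ⟨y, ?_⟩
  have h1 : G.edist x y = 1 := edist_eq_one_iff_adj.mpr h
  have h2 : (G.deleteEdges {s(x, y)}).edist x y ≠ 1 := by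
    intro hh
    rw [edist_eq_one_iff_adj] at hh
    simp at hh
  rw [h1]
  exact fun hh => h2 hh.symm

/-- If the complement of `M` is an independent set, then `M` is a DEM set. -/
lemma isDEMSet_of_indep (G : SimpleGraph V) (M : Set V)
    (h : ∀ u v, u ∉ M → v ∉ M → ¬ G.Adj u v) : IsDEMSet G M := by
  intro e he
  induction e with
  | h a b =>
    rw [mem_edgeSet] at he
    by_cases ha : a ∈ M
    · exact ⟨a, ha, monitors_of_adj G he⟩
    · by_cases hb : b ∈ M
      · refine ⟨b, hb, ?_⟩
        have := monitors_of_adj G he.symm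
        rwa [Sym2.eq_swap] at this
      · exact absurd he (h a b ha hb)

theorem stmt3 [Fintype V] (G : SimpleGraph V) (hG : G.Connected) :
    dem G = Fintype.card V - 1 ↔ G = ⊤ := by
  classical
  constructor
  · -- dem = n-1 → G = ⊤
    intro hdem
    by_contra hne
    -- there exist nonadjacent distinct u v
    have : ∃ u v : V, u ≠ v ∧ ¬ G.Adj u v := by
      by_contra hc
      push_neg at hc
      apply hne
      ext u v
      simp only [top_adj]
      exact ⟨fun h => h.ne, fun h => hc u v h⟩
    obtain ⟨u, v, huv, hnadj⟩ := this
    set M : Set V := {u, v}ᶜ with hM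
    have hMdem : IsDEMSet G M := by
      apply isDEMSet_of_indep
      intro a b ha hb
      simp only [hM, Set.mem_compl_iff, Set.mem_insert_iff, Set.mem_singleton_iff,
        not_not] at ha hb
      rcases ha with rfl | rfl <;> rcases hb with rfl | rfl
      · exact G.loopless.irrefl _
      · exact hnadj
      · exact fun h => hnadj h.symm
      · exact G.loopless.irrefl _
    have hcard : M.ncard = Fintype.card V - 2 := by
      have h2 : ({u, v} : Set V).ncard = 2 := Set.ncard_pair huv
      have := Set.ncard_add_ncard_compl ({u, v} : Set V)
      rw [h2, Nat.card_eq_fintype_card] at this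
      rw [hM]
      omega
    have hle : dem G ≤ Fintype.card V - 2 :=
      Nat.sInf_le ⟨M, hcard, hMdem⟩
    have hn2 : 2 ≤ Fintype.card V := by
      have := Fintype.card_le_of_injective (fun b : Bool => if b then u else v)
        (by intro a b hab; cases a <;> cases b <;> simp_all)
      simpa using this
    omega
  · -- G = ⊤ → dem = n-1
    rintro rfl
    have hne : Nonempty V := hG.nonempty
    have hn : 1 ≤ Fintype.card V := Fintype.card_pos
    apply le_antisymm
    · -- upper bound: M = univ \ {v}
      obtain ⟨v⟩ := hne
      have hMdem : IsDEMSet (⊤ : SimpleGraph V) ({v}ᶜ : Set V) := by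
        apply isDEMSet_of_indep
        intro a b ha hb
        simp only [Set.mem_compl_iff, Set.mem_singleton_iff, not_not] at ha hb
        subst ha; subst hb
        exact (⊤ : SimpleGraph V).loopless.irrefl _
      have hcard : ({v}ᶜ : Set V).ncard = Fintype.card V - 1 := by
        have := Set.ncard_add_ncard_compl ({v} : Set V)
        rw [Set.ncard_singleton, Nat.card_eq_fintype_card] at this
        omega
      exact Nat.sInf_le ⟨_, hcard, hMdem⟩
    · -- lower bound
      apply le_csInf
      · refine ⟨(Set.univ : Set V).ncard, Set.univ, rfl, ?_⟩
        exact isDEMSet_of_indep _ _ (fun a b ha _ => absurd (Set.mem_univ a) ha)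
      · rintro n ⟨M, rfl, hMdem⟩
        by_contra hlt
        push_neg at hlt
        -- then Mᶜ has at least 2 elements
        have hcompl : 1 < (Mᶜ : Set V).ncard := by
          have := Set.ncard_add_ncard_compl M
          rw [Nat.card_eq_fintype_card] at this
          omega
        obtain ⟨a, ha, b, hb, hab⟩ := (Set.one_lt_ncard (Set.toFinite _)).mp hcompl
        rw [Set.mem_compl_iff] at ha hb
        have hedge : s(a, b) ∈ (⊤ : SimpleGraph V).edgeSet := by
          rw [mem_edgeSet]; exact hab
        obtain ⟨x, hxM, y, hxy⟩ := hMdem _ hedge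
        apply hxy
        have hxa : x ≠ a := fun h => ha (h ▸ hxM)
        have hxb : x ≠ b := fun h => hb (h ▸ hxM)
        by_cases hxyeq : x = y
        · subst hxyeq; simp [SimpleGraph.edist_self]
        · have e1 : (⊤ : SimpleGraph V).edist x y = 1 :=
            edist_eq_one_iff_adj.mpr hxyeq
          have e2 : ((⊤ : SimpleGraph V).deleteEdges {s(a, b)}).edist x y = 1 := by
            rw [edist_eq_one_iff_adj]
            simp only [deleteEdges_adj, top_adj, Set.mem_singleton_iff]
            refine ⟨hxyeq, ?_⟩
            intro hcontra
            rw [Sym2.eq_iff] at hcontra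
            rcases hcontra with ⟨h1, _⟩ | ⟨h1, _⟩
            · exact hxa h1
            · exact hxb h1
          rw [e1, e2]
end

section
/- For any vertex x of a connected graph G, the set EM(x) of edges monitored by x induces a forest (i.e., the subgraph with edge set EM(x) contains no cycle). -/
open SimpleGraph

variable {V : Type*}

open SimpleGraph Walk in
private lemma key_le {G : SimpleGraph V} {x u v : V} (hadj : G.Adj u v)
    (hle : G.edist x u ≤ G.edist x v)
    (hv : (G.deleteEdges {s(u,v)}).edist x v ≤ G.edist x v) :
    ∀ n : ℕ, ∀ y : V, G.edist x y = (n : ℕ∞) →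
      (G.deleteEdges {s(u,v)}).edist x y ≤ (n : ℕ∞) := by
  intro n
  induction n using Nat.strong_induction_on with
  | _ n ih =>
    rcases n with _ | n
    · intro y hy
      have : x = y := by simpa using hy
      subst this
      simp
    · intro y hy
      obtain ⟨P, hP⟩ := exists_walk_of_edist_eq_coe hy
      have hPnil : ¬ P.reverse.Nil := by
        rw [not_nil_iff_lt_length, length_reverse, hP]; omega
      obtain ⟨z, hyz, R, hPR⟩ := not_nil_iff.mp hPnil
      have hRlen : R.length = n := by
        have := congrArg Walk.length hPR
        rw [length_reverse, hP] at this
        simpa using this.symm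
      -- G.edist x z = n
      have h1 : G.edist x z ≤ (n : ℕ∞) := by
        have := edist_le R.reverse
        rwa [length_reverse, hRlen] at this
      have h2 : G.edist x z = (n : ℕ∞) := by
        refine le_antisymm h1 ?_
        obtain ⟨k, hk, hkn⟩ := ENat.le_coe_iff.mp h1
        have htri : G.edist x y ≤ G.edist x z + G.edist z y :=
          SimpleGraph.edist_triangle
        have hzy : G.edist z y = 1 := edist_eq_one_iff_adj.mpr hyz.symm
        rw [hy, hk, hzy] at htri
        have hnk : n + 1 ≤ k + 1 := by exact_mod_cast htri
        rw [hk]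
        exact_mod_cast Nat.le_of_succ_le_succ hnk
      have hz := ih n (Nat.lt_succ_self n) z h2
      by_cases he : s(z, y) = s(u, v)
      · rw [Sym2.eq_iff] at he
        rcases he with ⟨rfl, rfl⟩ | ⟨rfl, rfl⟩
        · exact hv.trans hy.le
        · -- z = v, y = u : contradiction with hle
          exfalso
          rw [hy, h2] at hle
          exact absurd (by exact_mod_cast hle) (by omega)
      · have hadj' : (G.deleteEdges {s(u,v)}).Adj z y :=
          deleteEdges_adj.mpr ⟨hyz.symm, by simpa using he⟩
        calc (G.deleteEdges {s(u,v)}).edist x y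
            ≤ (G.deleteEdges {s(u,v)}).edist x z + (G.deleteEdges {s(u,v)}).edist z y :=
              SimpleGraph.edist_triangle
          _ ≤ (n : ℕ∞) + 1 := add_le_add hz (edist_eq_one_iff_adj.mpr hadj').le
          _ = ((n + 1 : ℕ) : ℕ∞) := by push_cast; ring

open SimpleGraph Walk in
private lemma key {G : SimpleGraph V} (hG : G.Connected) {x u v : V} (hadj : G.Adj u v)
    (hle : G.edist x u ≤ G.edist x v)
    (hv : (G.deleteEdges {s(u,v)}).edist x v ≤ G.edist x v) :
    ¬ monitors G x s(u,v) := by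
  rintro ⟨y, hy⟩
  apply hy
  have hne : G.edist x y ≠ ⊤ := edist_ne_top_iff_reachable.mpr (hG x y)
  obtain ⟨n, hn⟩ := WithTop.ne_top_iff_exists.mp hne
  refine le_antisymm ?_ ?_
  · exact edist_anti (deleteEdges_le _)
  · rw [← hn]
    exact key_le hadj hle hv n y hn.symm

open SimpleGraph Walk in
private lemma avoid {G : SimpleGraph V} (hG : G.Connected) {x u v : V} (hadj : G.Adj u v)
    (h : G.edist x v ≤ G.edist x u) :
    (G.deleteEdges {s(u,v)}).edist x v ≤ G.edist x v := by
  classical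
  obtain ⟨P, hP⟩ := hG.exists_walk_length_eq_edist x v
  have hu : u ∉ P.support := by
    intro hu
    have h1 : G.edist x u ≤ ((P.takeUntil u hu).length : ℕ∞) := edist_le _
    have h2 : (P.takeUntil u hu).length ≤ P.length := length_takeUntil_le P hu
    have h3 : (P.length : ℕ∞) ≤ ((P.takeUntil u hu).length : ℕ∞) := by
      rw [hP]; exact h.trans h1
    have h4 : (P.takeUntil u hu).length = P.length :=
      le_antisymm h2 (by exact_mod_cast h3)
    have h5 := congrArg Walk.length (P.take_spec hu)
    rw [length_append, h4] at h5
    have h6 : (P.dropUntil u hu).length = 0 := by omega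
    exact hadj.ne (eq_of_length_eq_zero h6)
  have he : s(u, v) ∉ P.edges := fun hh => hu (P.fst_mem_support_of_mem_edges hh)
  have hsub : ∀ e ∈ P.edges, e ∈ (G.deleteEdges {s(u,v)}).edgeSet := by
    intro e heP
    rw [edgeSet_deleteEdges]
    exact ⟨P.edges_subset_edgeSet heP, by rintro rfl; exact he heP⟩
  calc (G.deleteEdges {s(u,v)}).edist x v ≤ ((P.transfer _ hsub).length : ℕ∞) := edist_le _
    _ = (P.length : ℕ∞) := by rw [length_transfer]
    _ = G.edist x v := hP

open SimpleGraph Walk in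
private lemma levels_ne {G : SimpleGraph V} (hG : G.Connected) {x u v : V} (hadj : G.Adj u v)
    (hmon : monitors G x s(u,v)) : G.edist x u ≠ G.edist x v := by
  intro h
  exact key hG hadj h.le (avoid hG hadj h.ge) hmon

open SimpleGraph Walk in
private lemma unique_lower {G : SimpleGraph V} (hG : G.Connected) {x u v w : V}
    (hadj : G.Adj u v) (hmon : monitors G x s(u,v)) (hle : G.edist x u ≤ G.edist x v)
    (hwv : G.Adj w v) (hwlt : G.edist x w < G.edist x v) : w = u := by
  classical
  by_contra hwu
  apply key hG hadj hle ?_ hmon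
  obtain ⟨W, hW⟩ := hG.exists_walk_length_eq_edist x w
  have hvW : v ∉ W.support := by
    intro hv
    have h1 : G.edist x v ≤ ((W.takeUntil v hv).length : ℕ∞) := edist_le _
    have h2 : ((W.takeUntil v hv).length : ℕ∞) ≤ (W.length : ℕ∞) := by
      exact_mod_cast length_takeUntil_le W hv
    rw [hW] at h2
    exact absurd (h1.trans h2) (not_le.mpr hwlt)
  have heQ : s(u, v) ∉ (W.concat hwv).edges := by
    intro hh
    rw [edges_concat, List.concat_eq_append, List.mem_append, List.mem_singleton] at hh
    rcases hh with hh | hh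
    · exact hvW (W.snd_mem_support_of_mem_edges hh)
    · rcases Sym2.eq_iff.mp hh with ⟨h1, -⟩ | ⟨h1, h2⟩
      · exact hwu h1.symm
      · exact hadj.ne h1
  have hsub : ∀ e ∈ (W.concat hwv).edges, e ∈ (G.deleteEdges {s(u,v)}).edgeSet := by
    intro e heP
    rw [edgeSet_deleteEdges]
    exact ⟨(W.concat hwv).edges_subset_edgeSet heP, by rintro rfl; exact heQ heP⟩
  have hle2 : (G.deleteEdges {s(u,v)}).edist x v ≤ (((W.concat hwv).length : ℕ) : ℕ∞) := by
    calc (G.deleteEdges {s(u,v)}).edist x v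
        ≤ (((W.concat hwv).transfer _ hsub).length : ℕ∞) := edist_le _
      _ = (((W.concat hwv).length : ℕ) : ℕ∞) := by rw [length_transfer]
  rw [length_concat] at hle2
  refine hle2.trans ?_
  have h3 : (W.length : ℕ∞) < G.edist x v := by rw [hW]; exact hwlt
  have h4 : (W.length : ℕ∞) + 1 ≤ G.edist x v := Order.add_one_le_of_lt h3
  exact_mod_cast h4

open SimpleGraph Walk in
private lemma two_edges {G : SimpleGraph V} {m : V} {c : G.Walk m m} (hc : c.IsCycle) :
    ∃ a b : V, a ≠ b ∧ s(m, a) ∈ c.edges ∧ s(m, b) ∈ c.edges := by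
  cases c with
  | nil => exact absurd rfl hc.ne_nil
  | cons h q =>
    rename_i a
    have h3 := hc.three_le_length
    rw [length_cons] at h3
    have hqnil : ¬ q.reverse.Nil := by
      rw [not_nil_iff_lt_length, length_reverse]; omega
    obtain ⟨b, hb, r, hqr⟩ := not_nil_iff.mp hqnil
    have hbq : s(m, b) ∈ q.edges := by
      have : s(m, b) ∈ q.reverse.edges := by rw [hqr]; simp
      rwa [edges_reverse, List.mem_reverse] at this
    have hnd := hc.isTrail.edges_nodup
    rw [edges_cons] at hnd
    have hna : s(m, a) ∉ q.edges := (List.nodup_cons.mp hnd).1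
    refine ⟨a, b, ?_, by simp [edges_cons], List.mem_cons_of_mem _ hbq⟩
    rintro rfl
    exact hna hbq

open SimpleGraph Walk in
private lemma mem_rotate_support [DecidableEq V] {G : SimpleGraph V} {v u z : V} {c : G.Walk v v}
    (h : u ∈ c.support) (hz : z ∈ (c.rotate u h).support) : z ∈ c.support := by
  rcases (Walk.mem_support_iff _).mp hz with rfl | hz'
  · exact h
  · exact List.mem_of_mem_tail ((support_rotate c u h).perm.mem_iff.mp hz')

open SimpleGraph Walk in
theorem stmt4 [Fintype V] (G : SimpleGraph V) (hG : G.Connected) (x : V) :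
    (SimpleGraph.fromEdgeSet {e | e ∈ G.edgeSet ∧ monitors G x e}).IsAcyclic := by
  classical
  intro v c hc
  obtain ⟨m, hm, hmax⟩ := c.support.toFinset.exists_max_image (fun w => G.edist x w)
    ⟨v, List.mem_toFinset.mpr c.start_mem_support⟩
  rw [List.mem_toFinset] at hm
  have hc' : (c.rotate m hm).IsCycle := hc.rotate hm
  obtain ⟨a, b, hab, hea, heb⟩ := two_edges hc'
  have hSa := ((SimpleGraph.fromEdgeSet_adj _).mp
    ((SimpleGraph.mem_edgeSet _).mp ((c.rotate m hm).edges_subset_edgeSet hea))).1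
  have hSb := ((SimpleGraph.fromEdgeSet_adj _).mp
    ((SimpleGraph.mem_edgeSet _).mp ((c.rotate m hm).edges_subset_edgeSet heb))).1
  have hGa : G.Adj m a := (SimpleGraph.mem_edgeSet _).mp hSa.1
  have hGb : G.Adj m b := (SimpleGraph.mem_edgeSet _).mp hSb.1
  have hmona : monitors G x s(a, m) := by rw [Sym2.eq_swap]; exact hSa.2
  have hmonb : monitors G x s(b, m) := by rw [Sym2.eq_swap]; exact hSb.2
  have hain : a ∈ c.support :=
    mem_rotate_support hm ((c.rotate m hm).snd_mem_support_of_mem_edges hea)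
  have hbin : b ∈ c.support :=
    mem_rotate_support hm ((c.rotate m hm).snd_mem_support_of_mem_edges heb)
  have hlta : G.edist x a < G.edist x m :=
    (hmax a (List.mem_toFinset.mpr hain)).lt_of_ne
      (levels_ne hG hGa.symm hmona)
  have hltb : G.edist x b < G.edist x m :=
    (hmax b (List.mem_toFinset.mpr hbin)).lt_of_ne
      (levels_ne hG hGb.symm hmonb)
  exact hab.symm (unique_lower hG hGa.symm hmona hlta.le hGb.symm hltb)
end

section
/- Any vertex cover of a connected graph G is a distance-edge-monitoring set of G; consequently dem(G) ≤ β(G), the vertex cover number of G. -/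
open SimpleGraph

variable {V : Type*}

theorem stmt5 [Fintype V] (G : SimpleGraph V) (hG : G.Connected) :
    (∀ M : Set V, (∀ e ∈ G.edgeSet, ∃ v ∈ M, v ∈ e) → IsDEMSet G M) ∧
    dem G ≤ sInf {n | ∃ M : Set V, M.ncard = n ∧ ∀ e ∈ G.edgeSet, ∃ v ∈ M, v ∈ e} := by
  have key : ∀ M : Set V, (∀ e ∈ G.edgeSet, ∃ v ∈ M, v ∈ e) → IsDEMSet G M := by
    intro M hM e he
    obtain ⟨v, hvM, hve⟩ := hM e he
    refine ⟨v, hvM, ?_⟩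
    induction e with
    | h a b =>
      rcases Sym2.mem_iff.mp hve with rfl | rfl
      · refine ⟨b, ?_⟩
        have h1 : G.edist v b = 1 := edist_eq_one_iff_adj.mpr he
        rw [h1]
        intro h
        have := edist_eq_one_iff_adj.mp h.symm
        rw [deleteEdges_adj] at this
        exact this.2 rfl
      · refine ⟨a, ?_⟩
        have hadj : G.Adj v a := (G.adj_symm he)
        have h1 : G.edist v a = 1 := edist_eq_one_iff_adj.mpr hadj
        rw [h1]
        intro h
        have := edist_eq_one_iff_adj.mp h.symm
        rw [deleteEdges_adj] at this
        exact this.2 (Sym2.eq_swap)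
  refine ⟨key, ?_⟩
  have hne : {n | ∃ M : Set V, M.ncard = n ∧ ∀ e ∈ G.edgeSet, ∃ v ∈ M, v ∈ e}.Nonempty := by
    refine ⟨(Set.univ : Set V).ncard, Set.univ, rfl, ?_⟩
    intro e he
    induction e with
    | h a b => exact ⟨a, Set.mem_univ a, Sym2.mem_mk_left a b⟩
  obtain ⟨M, hMcard, hMcov⟩ := Nat.sInf_mem hne
  exact Nat.sInf_le ⟨M, hMcard, key M hMcov⟩
end

section
/- For every pair of integers r, n with 1 ≤ r ≤ n-1, there exists a connected graph G of order n with dem(G) = r. -/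
open SimpleGraph

variable {V : Type*}

namespace DemAux


def kite (n r : ℕ) : SimpleGraph (Fin n) where
  Adj a b := a ≠ b ∧ ((a.val ≤ r ∧ b.val ≤ r) ∨ a.val + 1 = b.val ∨ b.val + 1 = a.val)
  symm := ⟨by rintro a b ⟨h1, h2⟩; exact ⟨h1.symm, by tauto⟩⟩
  loopless := ⟨by rintro a ⟨h1, -⟩; exact h1 rfl⟩

lemma kite_adj {n r : ℕ} {a b : Fin n} :
    (kite n r).Adj a b ↔ a ≠ b ∧ ((a.val ≤ r ∧ b.val ≤ r) ∨ a.val + 1 = b.val ∨ b.val + 1 = a.val) :=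
  Iff.rfl

lemma adj_le {n r : ℕ} {a b : Fin n} (h : (kite n r).Adj a b) (ha : a.val < r) : b.val ≤ r := by
  rcases h with ⟨-, h | h | h⟩ <;> omega

lemma reach_zero {n r : ℕ} (hn : 0 < n) (k : Fin n) : (kite n r).Reachable k ⟨0, hn⟩ := by
  have key : ∀ m : ℕ, ∀ k : Fin n, k.val = m → (kite n r).Reachable k ⟨0, hn⟩ := by
    intro m
    induction m with
    | zero => intro k hk; rw [show k = ⟨0, hn⟩ from Fin.ext hk]
    | succ m ih =>
      intro k hk
      have hm : m < n := by omega
      have hadj : (kite n r).Adj k ⟨m, hm⟩ := by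
        rw [kite_adj]
        refine ⟨?_, Or.inr (Or.inr (by simp [hk]))⟩
        intro h; apply_fun Fin.val at h; simp at h; omega
      exact hadj.reachable.trans (ih ⟨m, hm⟩ rfl)
  exact key k.val k rfl

lemma kite_connected {n r : ℕ} (hn : 0 < n) : (kite n r).Connected := by
  rw [connected_iff]
  exact ⟨fun a b => (reach_zero hn a).trans (reach_zero hn b).symm, ⟨⟨0, hn⟩⟩⟩

/-- an endpoint of an edge monitors it -/
lemma monitors_self {G : SimpleGraph V} {a b : V} (h : G.Adj a b) : monitors G a s(a, b) := by
  refine ⟨b, ?_⟩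
  rw [edist_eq_one_iff_adj.mpr h]
  intro hc
  have : (G.deleteEdges {s(a, b)}).Adj a b := edist_eq_one_iff_adj.mp hc.symm
  rw [deleteEdges_adj] at this
  exact this.2 rfl

/-- deleting a path edge separates `≤ j` from `> j` -/
lemma cut {n r j : ℕ} (hrj : r ≤ j) {c d : Fin n} (hc : c.val = j) (hd : d.val = j + 1)
    {a b : Fin n} (h : ((kite n r).deleteEdges {s(c, d)}).Reachable a b) :
    (a.val ≤ j ↔ b.val ≤ j) := by
  have key : ∀ {a b : Fin n}, ((kite n r).deleteEdges {s(c, d)}).Adj a b →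
      (a.val ≤ j ↔ b.val ≤ j) := by
    intro a b hab
    rw [deleteEdges_adj] at hab
    obtain ⟨⟨hne, hor⟩, hmem⟩ := hab
    simp only [Set.mem_singleton_iff, Sym2.eq_iff] at hmem
    push_neg at hmem
    have h1 : ¬(a.val = j ∧ b.val = j + 1) := by
      rintro ⟨e1, e2⟩
      exact (hmem.1 (Fin.ext (by omega))) (Fin.ext (by omega))
    have h2 : ¬(a.val = j + 1 ∧ b.val = j) := by
      rintro ⟨e1, e2⟩
      exact (hmem.2 (Fin.ext (by omega))) (Fin.ext (by omega))
    rcases hor with h | h | h <;> omega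
  obtain ⟨p⟩ := h
  induction p with
  | nil => rfl
  | cons hadj p ih => exact (key hadj).trans ih

lemma monitors_path {n r : ℕ} (hrn : r < n) {a b : Fin n} (hb : r < b.val)
    (hba : a.val + 1 = b.val) :
    monitors (kite n r) ⟨r, hrn⟩ s(a, b) := by
  refine ⟨b, ?_⟩
  have h1 : (kite n r).edist ⟨r, hrn⟩ b ≠ ⊤ :=
    edist_ne_top_iff_reachable.mpr ((kite_connected (by omega)).preconnected _ _)
  have h2 : ((kite n r).deleteEdges {s(a, b)}).edist ⟨r, hrn⟩ b = ⊤ := by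
    apply edist_eq_top_of_not_reachable
    intro h
    have := cut (j := a.val) (by omega) rfl (by omega) h
    simp at this
    omega
  rw [h2]
  exact h1


lemma del_adj {n r : ℕ} {u v a b : Fin n} (hab : (kite n r).Adj a b)
    (h1 : ¬(a = u ∧ b = v)) (h2 : ¬(a = v ∧ b = u)) :
    ((kite n r).deleteEdges {s(u, v)}).Adj a b := by
  rw [deleteEdges_adj]
  refine ⟨hab, ?_⟩
  simp only [Set.mem_singleton_iff, Sym2.eq_iff]
  tauto

/-- Surgery: walks from `x ∉ {u,v}` can avoid the clique edge `s(u,v)` (u,v < r). -/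
lemma surgeryA {n r : ℕ} {u v : Fin n} (hu : u.val < r) (hv : v.val < r) (huv : u ≠ v) :
    ∀ ℓ : ℕ, ∀ x y : Fin n, x ≠ u → x ≠ v → ∀ p : (kite n r).Walk x y, p.length ≤ ℓ →
    ∃ q : ((kite n r).deleteEdges {s(u, v)}).Walk x y, q.length ≤ p.length := by
  intro ℓ
  induction ℓ using Nat.strong_induction_on with
  | _ ℓ ih =>
  intro x y hxu hxv p hp
  cases p with
  | nil => exact ⟨Walk.nil, le_refl _⟩
  | @cons _ w _ hxw p' =>
    simp only [Walk.length_cons] at hp ⊢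
    by_cases hwu : w = u
    · subst hwu
      cases p' with
      | nil =>
        exact ⟨Walk.cons (del_adj hxw (by tauto) (by tauto)) Walk.nil, by simp⟩
      | @cons _ z _ h2 p'' =>
        simp only [Walk.length_cons] at hp ⊢
        by_cases hzv : z = v
        · subst hzv
          have hxle : x.val ≤ r := adj_le hxw.symm hu
          have hxvadj : (kite n r).Adj x z := by
            rw [kite_adj]; exact ⟨hxv, Or.inl ⟨hxle, le_of_lt hv⟩⟩
          obtain ⟨q, hq⟩ := ih (p''.length + 1) (by omega) x y hxu hxv
            (Walk.cons hxvadj p'') (by simp)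
          simp only [Walk.length_cons] at hq
          exact ⟨q, by omega⟩
        · have hzu : z ≠ w := h2.ne'
          obtain ⟨q'', hq''⟩ := ih p''.length (by omega) z y hzu hzv p'' le_rfl
          refine ⟨Walk.cons (del_adj hxw (by tauto) (by tauto))
            (Walk.cons (del_adj h2 (by tauto) (by tauto)) q''), ?_⟩
          simp only [Walk.length_cons]
          omega
    · by_cases hwv : w = v
      · subst hwv
        cases p' with
        | nil =>
          exact ⟨Walk.cons (del_adj hxw (by tauto) (by tauto)) Walk.nil, by simp⟩
        | @cons _ z _ h2 p'' =>
          simp only [Walk.length_cons] at hp ⊢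
          by_cases hzu : z = u
          · subst hzu
            have hxle : x.val ≤ r := adj_le hxw.symm hv
            have hxuadj : (kite n r).Adj x z := by
              rw [kite_adj]; exact ⟨hxu, Or.inl ⟨hxle, le_of_lt hu⟩⟩
            obtain ⟨q, hq⟩ := ih (p''.length + 1) (by omega) x y hxu hxv
              (Walk.cons hxuadj p'') (by simp)
            simp only [Walk.length_cons] at hq
            exact ⟨q, by omega⟩
          · have hzv : z ≠ w := h2.ne'
            obtain ⟨q'', hq''⟩ := ih p''.length (by omega) z y hzu hzv p'' le_rfl
            refine ⟨Walk.cons (del_adj hxw (by tauto) (by tauto))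
              (Walk.cons (del_adj h2 (by tauto) (by tauto)) q''), ?_⟩
            simp only [Walk.length_cons]
            omega
      · obtain ⟨q', hq'⟩ := ih p'.length (by omega) w y hwu hwv p' le_rfl
        exact ⟨Walk.cons (del_adj hxw (by tauto) (by tauto)) q', by
          simp only [Walk.length_cons]; omega⟩




/-- Surgery for the edge `s(u, R)` where `R` is the attachment vertex:
walks from a clique vertex `x ∉ {u, R}` can avoid it. -/
lemma surgeryB {n r : ℕ} (hrn : r < n) {u : Fin n} (hu : u.val < r) :
    ∀ ℓ : ℕ, ∀ x y : Fin n, x.val < r → x ≠ u →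
    ∀ p : (kite n r).Walk x y, p.length ≤ ℓ →
    ∃ q : ((kite n r).deleteEdges {s(u, (⟨r, hrn⟩ : Fin n))}).Walk x y,
      q.length ≤ p.length := by
  set R : Fin n := ⟨r, hrn⟩ with hR
  have hRval : R.val = r := rfl
  have huR : u ≠ R := by intro h; apply_fun Fin.val at h; omega
  intro ℓ
  induction ℓ using Nat.strong_induction_on with
  | _ ℓ ih =>
  intro x y hxr hxu p hp
  have hxR : x ≠ R := by intro h; apply_fun Fin.val at h; omega
  cases p with
  | nil => exact ⟨Walk.nil, le_refl _⟩
  | @cons _ w _ hxw p' =>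
    simp only [Walk.length_cons] at hp ⊢
    have hwle : w.val ≤ r := adj_le hxw hxr
    by_cases hwu : w = u
    · subst hwu
      cases p' with
      | nil =>
        exact ⟨Walk.cons (del_adj hxw (by tauto) (by tauto)) Walk.nil, by simp⟩
      | @cons _ z _ h2 p'' =>
        simp only [Walk.length_cons] at hp ⊢
        have hzle : z.val ≤ r := adj_le h2 hu
        by_cases hzR : z = R
        · subst hzR
          have hxRadj : (kite n r).Adj x R := by
            rw [kite_adj]; exact ⟨hxR, Or.inl ⟨by omega, by omega⟩⟩
          obtain ⟨q, hq⟩ := ih (p''.length + 1) (by omega) x y hxr hxu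
            (Walk.cons hxRadj p'') (by simp)
          simp only [Walk.length_cons] at hq
          exact ⟨q, by omega⟩
        · have hzu : z ≠ w := h2.ne'
          have hzr : z.val < r := by
            rcases Nat.lt_or_ge z.val r with h | h
            · exact h
            · exact absurd (Fin.ext (by omega)) hzR
          obtain ⟨q'', hq''⟩ := ih p''.length (by omega) z y hzr hzu p'' le_rfl
          refine ⟨Walk.cons (del_adj hxw (by tauto) (by tauto))
            (Walk.cons (del_adj h2 (by tauto) (fun hc => huR hc.1)) q''), ?_⟩
          simp only [Walk.length_cons]
          omega
    · by_cases hwR : w = R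
      · subst hwR
        cases p' with
        | nil =>
          exact ⟨Walk.cons (del_adj hxw (by tauto) (by tauto)) Walk.nil, by simp⟩
        | @cons _ z _ h2 p'' =>
          simp only [Walk.length_cons] at hp ⊢
          have hzw : z ≠ R := h2.ne'
          by_cases hzu : z = u
          · subst hzu
            have hxzadj : (kite n r).Adj x z := by
              rw [kite_adj]; exact ⟨hxu, Or.inl ⟨by omega, by omega⟩⟩
            obtain ⟨q, hq⟩ := ih (p''.length + 1) (by omega) x y hxr hxu
              (Walk.cons hxzadj p'') (by simp)
            simp only [Walk.length_cons] at hq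
            exact ⟨q, by omega⟩
          · rcases Nat.lt_or_ge z.val r with hzr | hzr
            · -- z is a clique vertex, z ∉ {u, R}
              obtain ⟨q'', hq''⟩ := ih p''.length (by omega) z y hzr hzu p'' le_rfl
              refine ⟨Walk.cons (del_adj hxw (by tauto) (by tauto))
                (Walk.cons (del_adj h2 (fun hc => huR hc.1.symm) (by tauto)) q''), ?_⟩
              simp only [Walk.length_cons]
              omega
            · -- z is in the tail (z.val > r since z ≠ R and z.val ≥ r)
              have hztail : r < z.val := by
                rcases Nat.lt_or_ge r z.val with h | h
                · exact h
                · exact absurd (Fin.ext (by omega)) hzw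
              by_cases hmem : R ∈ p''.support
              · -- cut the tail excursion
                obtain ⟨q, hq⟩ := ih ((p''.dropUntil R hmem).length + 1) (by
                    have := p''.length_dropUntil_le hmem
                    omega) x y hxr hxu
                  (Walk.cons hxw (p''.dropUntil R hmem)) (by simp)
                simp only [Walk.length_cons] at hq
                have := p''.length_dropUntil_le hmem
                exact ⟨q, by omega⟩
              · -- the walk stays in the tail: transfer it
                have hedges : ∀ f ∈ p''.edges,
                    f ∈ ((kite n r).deleteEdges {s(u, R)}).edgeSet := by
                  intro f hf
                  rw [edgeSet_deleteEdges]
                  refine ⟨p''.edges_subset_edgeSet hf, ?_⟩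
                  simp only [Set.mem_singleton_iff]
                  rintro rfl
                  exact hmem (p''.snd_mem_support_of_mem_edges hf)
                refine ⟨Walk.cons (del_adj hxw (by tauto) (by tauto))
                  (Walk.cons (del_adj h2 (fun hc => huR hc.1.symm)
                    (fun hc => (by omega : z.val ≠ u.val) (by rw [hc.2])) )
                    (p''.transfer _ hedges)), ?_⟩
                simp only [Walk.length_cons, Walk.length_transfer]
                omega
      · have hwr : w.val < r := by
          rcases Nat.lt_or_ge w.val r with h | h
          · exact h
          · exact absurd (Fin.ext (by omega)) hwR
        obtain ⟨q', hq'⟩ := ih p'.length (by omega) w y hwr hwu p' le_rfl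
        exact ⟨Walk.cons (del_adj hxw (by tauto) (by tauto)) q', by
          simp only [Walk.length_cons]; omega⟩



/-- If `x ∉ {u, v}` for a clique edge with `u, v < r`, then `x` does not monitor it. -/
lemma no_monitor_clique {n r : ℕ} {u v x : Fin n} (hu : u.val < r) (hv : v.val < r)
    (huv : u ≠ v) (hxu : x ≠ u) (hxv : x ≠ v) : ¬ monitors (kite n r) x s(u, v) := by
  rintro ⟨y, hy⟩
  apply hy
  refine le_antisymm (edist_anti (deleteEdges_le _)) ?_
  by_cases hreach : (kite n r).Reachable x y
  · obtain ⟨p, hp⟩ := hreach.exists_walk_length_eq_edist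
    obtain ⟨q, hq⟩ := surgeryA hu hv huv p.length x y hxu hxv p le_rfl
    calc ((kite n r).deleteEdges {s(u, v)}).edist x y ≤ q.length := edist_le q
      _ ≤ p.length := by exact_mod_cast hq
      _ = (kite n r).edist x y := hp
  · rw [edist_eq_top_of_not_reachable hreach]
    exact le_top
 
/-- If `x` is a clique vertex other than `u` and the attachment vertex,
then `x` does not monitor the edge `s(u, R)`. -/
lemma no_monitor_r {n r : ℕ} (hrn : r < n) {u x : Fin n} (hu : u.val < r)
    (hxr : x.val < r) (hxu : x ≠ u) :
    ¬ monitors (kite n r) x s(u, (⟨r, hrn⟩ : Fin n)) := by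
  rintro ⟨y, hy⟩
  apply hy
  refine le_antisymm (edist_anti (deleteEdges_le _)) ?_
  by_cases hreach : (kite n r).Reachable x y
  · obtain ⟨p, hp⟩ := hreach.exists_walk_length_eq_edist
    obtain ⟨q, hq⟩ := surgeryB hrn hu p.length x y hxr hxu p le_rfl
    calc ((kite n r).deleteEdges {s(u, (⟨r, hrn⟩ : Fin n))}).edist x y ≤ q.length := edist_le q
      _ ≤ p.length := by exact_mod_cast hq
      _ = (kite n r).edist x y := hp
  · rw [edist_eq_top_of_not_reachable hreach]
    exact le_top

/-- The monitoring set: vertices with values in `[1, r]`. -/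
def Mset (n r : ℕ) (h : r < n) : Set (Fin n) :=
  (fun i : Fin r => (⟨i.val + 1, by omega⟩ : Fin n)) '' Set.univ

lemma mem_Mset {n r : ℕ} (h : r < n) {x : Fin n} :
    x ∈ Mset n r h ↔ 1 ≤ x.val ∧ x.val ≤ r := by
  constructor
  · rintro ⟨i, -, rfl⟩
    simp only
    omega
  · rintro ⟨h1, h2⟩
    exact ⟨⟨x.val - 1, by omega⟩, Set.mem_univ _, Fin.ext (by simp; omega)⟩

lemma Mset_ncard {n r : ℕ} (h : r < n) : (Mset n r h).ncard = r := by
  rw [Mset, Set.ncard_image_of_injective _ (fun i j hij => by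
    apply_fun Fin.val at hij
    simp only at hij
    exact Fin.ext (by omega)), Set.ncard_univ, Nat.card_eq_fintype_card, Fintype.card_fin]

lemma Mset_isDEM {n r : ℕ} (hr : 1 ≤ r) (hrn : r < n) :
    IsDEMSet (kite n r) (Mset n r hrn) := by
  intro e he
  induction e using Sym2.ind with
  | _ a b =>
  rw [mem_edgeSet] at he
  by_cases hcl : a.val ≤ r ∧ b.val ≤ r
  · -- a clique edge: an endpoint with value in [1, r] monitors it
    by_cases ha : 1 ≤ a.val
    · exact ⟨a, (mem_Mset hrn).mpr ⟨ha, hcl.1⟩, monitors_self he⟩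
    · have hb : 1 ≤ b.val := by
        have := he.ne
        by_contra hb
        exact this (Fin.ext (by omega))
      refine ⟨b, (mem_Mset hrn).mpr ⟨hb, hcl.2⟩, ?_⟩
      rw [Sym2.eq_swap]
      exact monitors_self he.symm
  · -- a path edge: the attachment vertex monitors it
    have hR : (⟨r, hrn⟩ : Fin n) ∈ Mset n r hrn := (mem_Mset hrn).mpr ⟨hr, le_rfl⟩
    obtain ⟨hne, hor | hor | hor⟩ := he
    · exact absurd hor hcl
    · refine ⟨_, hR, monitors_path hrn (b := b) (by omega) hor⟩
    · refine ⟨_, hR, ?_⟩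
      rw [Sym2.eq_swap]
      exact monitors_path hrn (b := a) (by omega) hor

/-- The lower bound: every DEM set of the kite graph has at least `r` elements. -/
lemma dem_lower {n r : ℕ} (hr : 1 ≤ r) (hrn : r < n) (M : Set (Fin n))
    (hM : IsDEMSet (kite n r) M) : r ≤ M.ncard := by
  classical
  have hfin : M.Finite := Set.toFinite M
  set A : Set (Fin n) := {x | x.val < r} with hA
  have hAim : A = (fun i : Fin r => (⟨i.val, by omega⟩ : Fin n)) '' Set.univ := by
    ext x
    simp only [hA, Set.mem_setOf_eq, Set.mem_image, Set.mem_univ, true_and]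
    constructor
    · intro hx
      exact ⟨⟨x.val, hx⟩, Fin.ext rfl⟩
    · rintro ⟨i, rfl⟩
      exact i.isLt
  have hAcard : A.ncard = r := by
    rw [hAim, Set.ncard_image_of_injective _ (fun i j hij => by
      apply_fun Fin.val at hij
      exact Fin.ext hij), Set.ncard_univ, Nat.card_eq_fintype_card, Fintype.card_fin]
  have step1 : ∀ u v : Fin n, u.val < r → v.val < r → u ≠ v → u ∈ M ∨ v ∈ M := by
    intro u v hu hv huv
    have hadj : (kite n r).Adj u v := ⟨huv, Or.inl ⟨by omega, by omega⟩⟩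
    obtain ⟨x, hxM, hxmon⟩ := hM s(u, v) (((kite n r).mem_edgeSet).mpr hadj)
    by_contra hcon
    push_neg at hcon
    have hxu : x ≠ u := fun h => hcon.1 (h ▸ hxM)
    have hxv : x ≠ v := fun h => hcon.2 (h ▸ hxM)
    exact no_monitor_clique hu hv huv hxu hxv hxmon
  by_cases hsub : A ⊆ M
  · calc r = A.ncard := hAcard.symm
      _ ≤ M.ncard := Set.ncard_le_ncard hsub hfin
  · obtain ⟨w, hwA, hwM⟩ := Set.not_subset.mp hsub
    have hwr : w.val < r := hwA
    have hAM : A \ {w} ⊆ M := by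
      rintro z ⟨hzA, hzw⟩
      simp only [Set.mem_singleton_iff] at hzw
      rcases step1 z w hzA hwr hzw with h | h
      · exact h
      · exact absurd h hwM
    have hadj : (kite n r).Adj w ⟨r, hrn⟩ := by
      refine ⟨fun h => ?_, Or.inl ⟨by omega, le_rfl⟩⟩
      apply_fun Fin.val at h
      simp only at h
      omega
    obtain ⟨x, hxM, hxmon⟩ := hM s(w, ⟨r, hrn⟩) (((kite n r).mem_edgeSet).mpr hadj)
    have hxw : x ≠ w := fun h => hwM (h ▸ hxM)
    have hxr : ¬ x.val < r := fun h => no_monitor_r hrn hwr h hxw hxmon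
    have hins : insert x (A \ {w}) ⊆ M := Set.insert_subset hxM hAM
    have hxnot : x ∉ A \ {w} := fun h => hxr h.1
    calc r = (insert x (A \ {w})).ncard := by
          rw [Set.ncard_insert_of_notMem hxnot (Set.toFinite _),
            Set.ncard_diff_singleton_of_mem hwA, hAcard]
          omega
      _ ≤ M.ncard := Set.ncard_le_ncard hins hfin

end DemAux

theorem stmt6 (r n : ℕ) (hr : 1 ≤ r) (hrn : r ≤ n - 1) :
    ∃ G : SimpleGraph (Fin n), G.Connected ∧ dem G = r := by
  have hn : 2 ≤ n := by omega
  have hrn' : r < n := by omega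
  refine ⟨DemAux.kite n r, DemAux.kite_connected (by omega), ?_⟩
  have hmem : r ∈ {k | ∃ M : Set (Fin n), M.ncard = k ∧ IsDEMSet (DemAux.kite n r) M} :=
    ⟨DemAux.Mset n r hrn', DemAux.Mset_ncard hrn', DemAux.Mset_isDEM hr hrn'⟩
  refine le_antisymm (Nat.sInf_le hmem) ?_
  refine le_csInf ⟨r, hmem⟩ ?_
  rintro k ⟨M, rfl, hM⟩
  exact DemAux.dem_lower hr hrn' M hM
end

section
/- For any connected graph G and any edge e ∈ E(G), dem(G-e) - dem(G) ≤ 2. -/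
open SimpleGraph

variable {V : Type*}

/-- Any walk containing edge `e` decomposes at an occurrence of `e`. -/
lemma walk_decomp_at_edge {G : SimpleGraph V} {x y : V} {e : Sym2 V}
    (p : G.Walk x y) (he : e ∈ p.edges) :
    ∃ (u v : V) (q : G.Walk x u) (h : G.Adj u v) (r : G.Walk v y),
      s(u, v) = e ∧ p = q.append (SimpleGraph.Walk.cons h r) := by
  induction p with
  | nil => simp at he
  | @cons a b c hab p ih =>
    rw [SimpleGraph.Walk.edges_cons, List.mem_cons] at he
    rcases he with he | he
    · exact ⟨a, b, SimpleGraph.Walk.nil, hab, p, he.symm, rfl⟩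
    · obtain ⟨u, v, q, h, r, he', hp⟩ := ih he
      exact ⟨u, v, SimpleGraph.Walk.cons hab q, h, r, he',
        by rw [hp, SimpleGraph.Walk.cons_append]⟩

lemma key_lemma {G : SimpleGraph V} {x y u v : V} {e f : Sym2 V} {n : ℕ}
    (q : G.Walk x u) (h : G.Adj u v) (r : G.Walk v y)
    (hn : q.length + 1 + r.length = n)
    (hdist : G.edist x y = (n : ℕ∞))
    (hf : (n : ℕ∞) < (G.deleteEdges {f}).edist x y)
    (he : s(u, v) = e)
    (her : e ∉ r.edges)
    (hfq : f ∉ q.edges) (hfe : f ≠ e) :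
    (G.deleteEdges {e}).edist v y < ((G.deleteEdges {e}).deleteEdges {f}).edist v y := by
  set G' := G.deleteEdges {e} with hG'
  have hrE : ∀ e' ∈ r.edges, e' ∈ G'.edgeSet := by
    intro e' he'
    rw [hG', edgeSet_deleteEdges]
    refine ⟨r.edges_subset_edgeSet he', ?_⟩
    simp only [Set.mem_singleton_iff]
    rintro rfl; exact her he'
  have h1 : G'.edist v y ≤ (r.length : ℕ∞) := by
    have := SimpleGraph.edist_le (r.transfer G' hrE)
    rwa [SimpleGraph.Walk.length_transfer] at this
  refine lt_of_le_of_ne (edist_anti (deleteEdges_le _)) ?_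
  intro heq2
  have hne : (G'.deleteEdges {f}).edist v y ≠ ⊤ := by
    rw [← heq2]
    exact (h1.trans_lt (ENat.coe_lt_top _)).ne
  obtain ⟨Q, hQ⟩ := exists_walk_of_edist_ne_top hne
  have hQlen : (Q.length : ℕ∞) ≤ (r.length : ℕ∞) := by
    rw [hQ, ← heq2]; exact h1
  have hQlen' : Q.length ≤ r.length := by exact_mod_cast hQlen
  have hQE : ∀ e' ∈ Q.edges, e' ∈ G.edgeSet := by
    intro e' he'
    have := Q.edges_subset_edgeSet he'
    rw [edgeSet_deleteEdges, hG', edgeSet_deleteEdges] at this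
    exact this.1.1
  have hQf : f ∉ Q.edges := by
    intro hmem
    have := Q.edges_subset_edgeSet hmem
    rw [edgeSet_deleteEdges] at this
    exact this.2 rfl
  set W : G.Walk x y := q.append (SimpleGraph.Walk.cons h (Q.transfer G hQE)) with hW
  have hWlen : W.length = q.length + 1 + Q.length := by
    rw [hW]
    simp only [SimpleGraph.Walk.length_append, SimpleGraph.Walk.length_cons,
      SimpleGraph.Walk.length_transfer]
    omega
  have hWle : W.length ≤ n := by omega
  have hWf : f ∉ W.edges := by
    rw [hW]
    simp only [SimpleGraph.Walk.edges_append, SimpleGraph.Walk.edges_cons,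
      SimpleGraph.Walk.edges_transfer, List.mem_append, List.mem_cons]
    rintro (hc | hc | hc)
    · exact hfq hc
    · exact hfe (hc.trans he)
    · exact hQf hc
  have hWE : ∀ e' ∈ W.edges, e' ∈ (G.deleteEdges {f}).edgeSet := by
    intro e' he'
    rw [edgeSet_deleteEdges]
    refine ⟨W.edges_subset_edgeSet he', ?_⟩
    simp only [Set.mem_singleton_iff]
    rintro rfl; exact hWf he'
  have hcontra : (G.deleteEdges {f}).edist x y ≤ (n : ℕ∞) := by
    have := SimpleGraph.edist_le (W.transfer (G.deleteEdges {f}) hWE)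
    rw [SimpleGraph.Walk.length_transfer] at this
    exact this.trans (by exact_mod_cast hWle)
  exact absurd hf (not_lt.mpr hcontra)

lemma isDEMSet_univ (H : SimpleGraph V) : IsDEMSet H Set.univ := by
  intro f hf
  induction f using Sym2.ind with
  | _ a b =>
    refine ⟨a, Set.mem_univ a, b, ?_⟩
    rw [SimpleGraph.mem_edgeSet] at hf
    rw [edist_eq_one_iff_adj.mpr hf]
    intro hcon
    have := edist_eq_one_iff_adj.mp hcon.symm
    rw [deleteEdges_adj] at this
    exact this.2 rfl

theorem stmt7 [Fintype V] (G : SimpleGraph V) (hG : G.Connected)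
    (e : Sym2 V) (he : e ∈ G.edgeSet) :
    dem (G.deleteEdges {e}) - dem G ≤ 2 := by
  classical
  revert he
  induction e using Sym2.ind with
  | _ u v =>
  intro he
  set e : Sym2 V := s(u, v) with hedef
  set G' := G.deleteEdges {e} with hG'
  -- get an optimal DEM set of G
  have hSne : {n | ∃ M : Set V, M.ncard = n ∧ IsDEMSet G M}.Nonempty :=
    ⟨(Set.univ : Set V).ncard, Set.univ, rfl, isDEMSet_univ G⟩
  obtain ⟨M, hMcard, hMdem⟩ := Nat.sInf_mem hSne
  have hMd : M.ncard = dem G := hMcard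
  -- the candidate set
  set M' : Set V := M ∪ {u, v} with hM'
  have hDEM' : IsDEMSet G' M' := by
    intro f hfG'
    have hfG : f ∈ G.edgeSet ∧ f ≠ e := by
      rw [hG', edgeSet_deleteEdges] at hfG'
      exact ⟨hfG'.1, hfG'.2⟩
    obtain ⟨x, hxM, y, hmon⟩ := hMdem f hfG.1
    by_cases hc : G'.edist x y ≠ (G'.deleteEdges {f}).edist x y
    · exact ⟨x, Or.inl hxM, y, hc⟩
    push_neg at hc
    have hlt : G.edist x y < (G.deleteEdges {f}).edist x y :=
      lt_of_le_of_ne (edist_anti (deleteEdges_le _)) hmon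
    have hle2 : (G.deleteEdges {f}).edist x y ≤ (G'.deleteEdges {f}).edist x y := by
      apply edist_anti
      intro a b hab
      simp only [hG', deleteEdges_adj, Set.mem_singleton_iff] at hab ⊢
      tauto
    have hlt2 : G.edist x y < G'.edist x y := by
      rw [hc]; exact hlt.trans_le hle2
    have hnetop : G.edist x y ≠ ⊤ := hlt.ne_top
    lift G.edist x y to ℕ using hnetop with n hn
    obtain ⟨p0, hp0⟩ := exists_walk_of_edist_ne_top
      (show G.edist x y ≠ ⊤ by rw [← hn]; exact ENat.coe_ne_top n)
    set P := p0.bypass with hP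
    have hPpath : P.IsPath := p0.bypass_isPath
    have hPlen : P.length = n := by
      have h1 : (n : ℕ∞) ≤ (P.length : ℕ∞) := hn.trans_le (SimpleGraph.edist_le P)
      have h2 : P.length ≤ p0.length := p0.length_bypass_le
      have h3 : (p0.length : ℕ∞) = (n : ℕ∞) := hp0.trans hn.symm
      have h4 : p0.length = n := by exact_mod_cast h3
      have h5 : n ≤ P.length := by exact_mod_cast h1
      omega
    have hfP : f ∈ P.edges := by
      by_contra hfP
      have hPE : ∀ e' ∈ P.edges, e' ∈ (G.deleteEdges {f}).edgeSet := by
        intro e' he'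
        rw [edgeSet_deleteEdges]
        refine ⟨P.edges_subset_edgeSet he', ?_⟩
        simp only [Set.mem_singleton_iff]; rintro rfl; exact hfP he'
      have := SimpleGraph.edist_le (P.transfer (G.deleteEdges {f}) hPE)
      rw [SimpleGraph.Walk.length_transfer, hPlen] at this
      exact absurd hlt (not_lt.mpr this)
    have heP : e ∈ P.edges := by
      by_contra heP
      have hPE : ∀ e' ∈ P.edges, e' ∈ G'.edgeSet := by
        intro e' he'
        rw [show G' = G.deleteEdges {e} from rfl, edgeSet_deleteEdges]
        refine ⟨P.edges_subset_edgeSet he', ?_⟩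
        simp only [Set.mem_singleton_iff]; rintro rfl; exact heP he'
      have := SimpleGraph.edist_le (P.transfer G' hPE)
      rw [SimpleGraph.Walk.length_transfer, hPlen] at this
      exact absurd hlt2 (not_lt.mpr this)
    obtain ⟨u', v', q, h, r, he', hdecomp⟩ := walk_decomp_at_edge P heP
    have hedges : P.edges = q.edges ++ (s(u', v') :: r.edges) := by
      rw [hdecomp, SimpleGraph.Walk.edges_append, SimpleGraph.Walk.edges_cons]
    have hnodup : P.edges.Nodup := hPpath.isTrail.edges_nodup
    rw [hedges] at hnodup
    have hdisj := (List.nodup_append'.mp hnodup).2.2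
    have hnodup2 := (List.nodup_append'.mp hnodup).2.1
    have her : e ∉ r.edges := by
      rw [← he']
      exact fun hc => (List.nodup_cons.mp hnodup2).1 hc
    have heq : e ∉ q.edges := by
      rw [← he']
      exact fun hc => hdisj hc List.mem_cons_self
    have hlensum : q.length + 1 + r.length = n := by
      have := hPlen
      rw [hdecomp, SimpleGraph.Walk.length_append, SimpleGraph.Walk.length_cons] at this
      omega
    have hfP' : f ∈ q.edges ∨ f ∈ r.edges := by
      rw [hedges] at hfP
      simp only [List.mem_append, List.mem_cons] at hfP
      rcases hfP with hc | hc | hc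
      · exact Or.inl hc
      · exact absurd (hc.trans he') hfG.2
      · exact Or.inr hc
    have hmemuv : v' ∈ ({u, v} : Set V) ∧ u' ∈ ({u, v} : Set V) := by
      have : s(u', v') = s(u, v) := he'
      rw [Sym2.eq_iff] at this
      rcases this with ⟨rfl, rfl⟩ | ⟨rfl, rfl⟩ <;> simp
    rcases hfP' with hfq | hfr
    · -- f before u' : monitor u' with witness x, via reversed walk
      have hkey := key_lemma (n := n) r.reverse h.symm q.reverse
        (by simp only [SimpleGraph.Walk.length_reverse]; omega)
        (show G.edist y x = (n : ℕ∞) by rw [SimpleGraph.edist_comm]; exact hn.symm)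
        (show (n : ℕ∞) < (G.deleteEdges {f}).edist y x by
          rw [SimpleGraph.edist_comm]; exact hlt)
        (Sym2.eq_swap.trans he')
        (by rw [SimpleGraph.Walk.edges_reverse, List.mem_reverse]; exact heq)
        (by rw [SimpleGraph.Walk.edges_reverse, List.mem_reverse]; exact fun hc =>
          hdisj hfq (List.mem_cons_of_mem _ hc))
        (fun hc => hfG.2 hc)
      exact ⟨u', Or.inr hmemuv.2, x, hkey.ne⟩
    · -- f after v' : monitor v' with witness y
      have hfq' : f ∉ q.edges := fun hc => hdisj hc (List.mem_cons_of_mem _ hfr)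
      have hkey := key_lemma (n := n) q h r hlensum hn.symm hlt he' her hfq'
        (fun hc => hfG.2 hc)
      exact ⟨v', Or.inr hmemuv.1, y, hkey.ne⟩
  have hdemle : dem G' ≤ M'.ncard := Nat.sInf_le ⟨M', rfl, hDEM'⟩
  have hcard : M'.ncard ≤ dem G + 2 := by
    calc M'.ncard ≤ M.ncard + ({u, v} : Set V).ncard := Set.ncard_union_le _ _
    _ ≤ dem G + 2 := by
        have h1 : ({u, v} : Set V).ncard ≤ 2 := by
          have := Set.ncard_insert_le u ({v} : Set V)
          simpa [Set.ncard_singleton] using this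
        omega
  have hfinal : dem G' ≤ dem G + 2 := hdemle.trans hcard
  omega
end

section
/- Let G be a connected graph and uv ∈ E(G). If uv ∉ EM(w) for every w ∈ (N_G(u) ∪ N_G(v)) \ {u,v}, then uv is monitored only by u and v, i.e., uv ∉ EM(x) for every x ∈ V(G) \ {u,v}. -/
open SimpleGraph

variable {V : Type*}

/-- Key inductive lemma: walking along a shortest walk from `x` to `y`, if no
neighbor of `u` or `v` (other than `u`, `v`) monitors `s(u,v)`, then the
distance from `x` to `y` cannot strictly increase upon deleting `s(u,v)`. -/
lemma key_aux (G : SimpleGraph V) (u v : V)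
    (h : ∀ w ∈ G.neighborSet u ∪ G.neighborSet v, w ≠ u → w ≠ v →
      ¬ monitors G w s(u, v)) (y : V) :
    ∀ {x : V} (p : G.Walk x y), (p.length : ℕ∞) = G.edist x y → x ≠ u → x ≠ v →
      ¬ (G.edist x y < (G.deleteEdges {s(u,v)}).edist x y) := by
  intro x p
  induction p with
  | nil =>
    intro hlen _ _ hlt
    simp [edist_self] at hlt
  | @cons x b y hadj q ih =>
    intro hlen hxu hxv hlt
    set D := G.deleteEdges {s(u,v)} with hD
    have hsxb : s(x, b) ≠ s(u, v) := by
      intro he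
      rw [Sym2.eq_iff] at he
      rcases he with ⟨h1, _⟩ | ⟨h1, _⟩
      · exact hxu h1
      · exact hxv h1
    have hDadj : D.Adj x b := by
      rw [hD, deleteEdges_adj]
      exact ⟨hadj, by simpa using hsxb⟩
    have hq_le : G.edist b y ≤ q.length := edist_le q
    have hxb : G.edist x b ≤ 1 := by simpa using edist_le hadj.toWalk
    have hlen' : (q.length : ℕ∞) + 1 = G.edist x y := by
      rw [← hlen]; push_cast [SimpleGraph.Walk.length_cons]; ring
    have hqlen : (q.length : ℕ∞) = G.edist b y := by
      refine le_antisymm ?_ hq_le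
      have h2 : (q.length : ℕ∞) + 1 ≤ G.edist b y + 1 := by
        rw [hlen']
        calc G.edist x y ≤ G.edist x b + G.edist b y := SimpleGraph.edist_triangle
          _ ≤ 1 + G.edist b y := add_le_add_left hxb _
          _ = G.edist b y + 1 := by ring
      exact (ENat.add_le_add_iff_right ENat.one_ne_top).mp h2
    by_cases hb : b = u ∨ b = v
    · refine h x ?_ hxu hxv ⟨y, ne_of_lt hlt⟩
      rcases hb with rfl | rfl
      · exact Or.inl hadj.symm
      · exact Or.inr hadj.symm
    · push_neg at hb
      refine ih hqlen hb.1 hb.2 ?_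
      by_contra hnot
      have hDby : D.edist b y ≤ G.edist b y := not_lt.mp hnot
      have hDxb : D.edist x b ≤ 1 := by simpa using edist_le hDadj.toWalk
      have : D.edist x y ≤ G.edist x y := by
        calc D.edist x y ≤ D.edist x b + D.edist b y := SimpleGraph.edist_triangle
          _ ≤ 1 + G.edist b y := add_le_add hDxb hDby
          _ = G.edist b y + 1 := by ring
          _ = (q.length : ℕ∞) + 1 := by rw [hqlen]
          _ = G.edist x y := hlen'
      exact absurd hlt (not_lt.mpr this)

theorem stmt8 [Fintype V] (G : SimpleGraph V) (hG : G.Connected) (u v : V)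
    (huv : G.Adj u v)
    (h : ∀ w ∈ G.neighborSet u ∪ G.neighborSet v, w ≠ u → w ≠ v →
      ¬ monitors G w s(u, v)) :
    ∀ x : V, x ≠ u → x ≠ v → ¬ monitors G x s(u, v) := by
  rintro x hxu hxv ⟨y, hne⟩
  have hle : G.edist x y ≤ (G.deleteEdges {s(u,v)}).edist x y :=
    edist_anti (deleteEdges_le _)
  have hlt : G.edist x y < (G.deleteEdges {s(u,v)}).edist x y := lt_of_le_of_ne hle hne
  obtain ⟨p, hp⟩ := (hG x y).exists_walk_length_eq_edist
  exact key_aux G u v h y p hp hxu hxv hlt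
end

section
/- In a cycle C_n (n ≥ 3), for any vertex v, the number of edges of C_n monitored by v equals n-1 if n is odd and n-2 if n is even. -/
open SimpleGraph

variable {V : Type*}

section helpers

open Fin.CommRing Fin.NatCast

variable {n : ℕ} [NeZero n]


lemma edist_le_sInf_aux {V : Type*} {G : SimpleGraph V} {u v : V} {c : ℕ∞}
    (h : ∀ p : G.Walk u v, c ≤ p.length) : c ≤ G.edist u v := by
  rw [SimpleGraph.edist_eq_sInf]
  exact le_sInf (by rintro b ⟨p, rfl⟩; exact h p)

-- edist under iso
lemma edist_hom_le {V W : Type*} {G : SimpleGraph V} {H : SimpleGraph W} (f : G →g H)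
    (u v : V) : H.edist (f u) (f v) ≤ G.edist u v := by
  rw [SimpleGraph.edist_eq_sInf]
  refine le_sInf ?_
  rintro b ⟨w, rfl⟩
  calc H.edist (f u) (f v) ≤ ((w.map f).length : ℕ∞) := SimpleGraph.edist_le _
    _ = (w.length : ℕ∞) := by rw [Walk.length_map]

lemma edist_iso {V W : Type*} {G : SimpleGraph V} {H : SimpleGraph W} (f : G ≃g H)
    (u v : V) : H.edist (f u) (f v) = G.edist u v := by
  refine le_antisymm (edist_hom_le f.toHom u v) ?_
  have := edist_hom_le f.symm.toHom (f u) (f v)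
  simpa using this

-- path graph distance
lemma pathGraph_edist_le {n : ℕ} (k : ℕ) (u w : Fin n) (h : u.val + k = w.val) :
    (pathGraph n).edist u w ≤ (k : ℕ∞) := by
  induction k generalizing u with
  | zero =>
    have : u = w := Fin.ext (by omega)
    simp [this]
  | succ k ih =>
    have h1 : u.val + 1 < n := by have := w.isLt; omega
    set u' : Fin n := ⟨u.val + 1, h1⟩ with hu'
    have hadj : (pathGraph n).Adj u u' := by
      rw [pathGraph_adj]; left; rfl
    have h2 : u'.val + k = w.val := by simp [hu']; omega
    calc (pathGraph n).edist u w ≤ (pathGraph n).edist u u' + (pathGraph n).edist u' w :=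
          SimpleGraph.edist_triangle
      _ ≤ 1 + (k : ℕ∞) := by
          gcongr
          · exact le_of_eq (SimpleGraph.edist_eq_one_iff_adj.mpr hadj)
          · exact ih u' h2
      _ = ((k+1 : ℕ) : ℕ∞) := by push_cast; ring

lemma pathGraph_walk_ge {n : ℕ} {u w : Fin n} (p : (pathGraph n).Walk u w) :
    (Nat.dist u.val w.val) ≤ p.length := by
  induction p with
  | nil => simp
  | @cons a b c h q ih =>
    rw [pathGraph_adj] at h
    have hd : Nat.dist a.val b.val = 1 := by
      rcases h with h | h <;> simp [Nat.dist] <;> omega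
    calc Nat.dist a.val c.val ≤ Nat.dist a.val b.val + Nat.dist b.val c.val :=
          Nat.dist.triangle_inequality _ _ _
      _ ≤ 1 + q.length := by rw [hd]; omega
      _ = _ := by rw [Walk.length_cons]; omega

lemma pathGraph_edist {n : ℕ} (u w : Fin n) :
    (pathGraph n).edist u w = (Nat.dist u.val w.val : ℕ) := by
  refine le_antisymm ?_ ?_
  · rcases le_total u.val w.val with h | h
    · rw [Nat.dist_eq_sub_of_le h]
      exact pathGraph_edist_le _ u w (by omega)
    · rw [Nat.dist_eq_sub_of_le_right h, SimpleGraph.edist_comm]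
      exact pathGraph_edist_le _ w u (by omega)
  · exact edist_le_sInf_aux fun p => by exact_mod_cast pathGraph_walk_ge p



lemma fin_one_val (hn : 2 ≤ n) : (1 : Fin n).val = 1 := by
  rw [Fin.val_one']; exact Nat.mod_eq_of_lt (by omega)

lemma fin_sub_val_of_le {a b : Fin n} (h : b.val ≤ a.val) :
    (a - b).val = a.val - b.val := by
  have hb := a.isLt
  have h2 : n - b.val + a.val = n + (a.val - b.val) := by omega
  rw [Fin.coe_sub, h2, Nat.add_mod_left, Nat.mod_eq_of_lt (by omega)]

lemma fin_sub_val_of_lt {a b : Fin n} (h : a.val < b.val) :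
    (a - b).val = n - (b.val - a.val) := by
  have hb := b.isLt
  rw [Fin.coe_sub, Nat.mod_eq_of_lt (by omega)]
  omega

lemma fin_sub_one_val (hn : 2 ≤ n) {w : Fin n} (hw : w ≠ 0) :
    (w - 1).val = w.val - 1 := by
  have h0 : (1 : Fin n).val ≤ w.val := by
    rw [fin_one_val hn]
    have : w.val ≠ 0 := fun h0 => hw (Fin.ext (by rw [h0]; simp))
    omega
  rw [fin_sub_val_of_le h0, fin_one_val hn]

lemma fin_val_add_one_le (z : Fin n) : ((z + 1 : Fin n)).val ≤ z.val + 1 := by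
  rw [Fin.val_add]
  have h1 := Nat.mod_le 1 n
  have h2 : (1 : Fin n).val = 1 % n := Fin.val_one' n
  exact le_trans (Nat.mod_le _ _) (by omega)

lemma fin_min_succ (hn : 2 ≤ n) (z : Fin n) :
    min ((z + 1 : Fin n)).val ((-(z + 1) : Fin n)).val ≤ min z.val ((-z : Fin n)).val + 1 := by
  rcases eq_or_ne z 0 with rfl | hz
  · have := fin_val_add_one_le (0 : Fin n)
    refine le_trans (min_le_left _ _) ?_
    simpa using this
  · rcases le_total z.val ((-z : Fin n)).val with h | h
    · rw [min_eq_left h]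
      exact le_trans (min_le_left _ _) (fin_val_add_one_le z)
    · rw [min_eq_right h]
      refine le_trans (min_le_right _ _) ?_
      have hnz : (-z : Fin n) ≠ 0 := by simpa using hz
      have he : (-(z + 1) : Fin n) = -z - 1 := by ring
      rw [he, fin_sub_one_val hn hnz]
      omega

lemma fin_min_pred (hn : 2 ≤ n) (z : Fin n) :
    min ((z - 1 : Fin n)).val ((-(z - 1) : Fin n)).val ≤ min z.val ((-z : Fin n)).val + 1 := by
  have h := fin_min_succ hn (-z)
  have h1 : (-z + 1 : Fin n) = -(z - 1) := by ring
  have h2 : (-(-z + 1) : Fin n) = z - 1 := by ring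
  rw [h1, neg_neg, neg_neg] at h
  omega

theorem cycle_adj (hn : 2 ≤ n) (x : Fin n) : (cycleGraph n).Adj x (x + 1) := by
  rw [cycleGraph_adj']
  right
  have : x + 1 - x = (1 : Fin n) := by ring
  rw [this, fin_one_val hn]

lemma cycle_walk_ge (hn : 2 ≤ n) {x y : Fin n} (p : (cycleGraph n).Walk x y) :
    min ((y - x : Fin n)).val ((x - y : Fin n)).val ≤ p.length := by
  induction p with
  | nil => simp
  | @cons a b c h q ih =>
    rw [cycleGraph_adj'] at h
    rw [Walk.length_cons]
    have key : min ((c - a : Fin n)).val ((a - c : Fin n)).val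
        ≤ min ((c - b : Fin n)).val ((b - c : Fin n)).val + 1 := by
      rcases h with h | h
      · have hab : a = b + 1 := by
          have h1 : a - b = 1 := Fin.ext (by rw [h, fin_one_val hn])
          linear_combination (norm := ring_nf) h1
        subst hab
        have e1 : (c - (b + 1) : Fin n) = (c - b) - 1 := by ring
        have e2 : ((b + 1) - c : Fin n) = -((c - b) - 1) := by ring
        have e3 : (b - c : Fin n) = -(c - b) := by ring
        rw [e1, e2, e3]
        exact fin_min_pred hn (c - b)
      · have hab : b = a + 1 := by
          have h1 : b - a = 1 := Fin.ext (by rw [h, fin_one_val hn])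
          linear_combination (norm := ring_nf) h1
        subst hab
        have e1 : (c - a : Fin n) = (c - (a + 1)) + 1 := by ring
        have e2 : (a - c : Fin n) = -((c - (a + 1)) + 1) := by ring
        have e3 : ((a+1) - c : Fin n) = -(c - (a+1)) := by ring
        rw [e1, e2, e3]
        exact fin_min_succ hn (c - (a + 1))
    omega



lemma fin_eq_add_one_of_val {p q : Fin n} (hn : 2 ≤ n) (h : (q - p).val = 1) : q = p + 1 := by
  have h1 : q - p = 1 := Fin.ext (by rw [h, fin_one_val hn])
  linear_combination (norm := ring_nf) h1

lemma fin_neg_one_val (hn : 2 ≤ n) : ((-1 : Fin n)).val = n - 1 := by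
  have h0 : (-1 : Fin n) = 0 - 1 := by ring
  have h1 := fin_one_val (n := n) hn
  rw [h0, fin_sub_val_of_lt (by rw [h1]; simp), h1]
  simp

-- generic forward walk bound
lemma edist_forward (H : SimpleGraph (Fin n)) (a : Fin n) (k : ℕ)
    (h : ∀ j : ℕ, j < k → H.Adj (a + j) (a + j + 1)) :
    H.edist a (a + (k : Fin n)) ≤ (k : ℕ∞) := by
  induction k with
  | zero => simp
  | succ k ih =>
    have hadj : H.Adj (a + (k : Fin n)) (a + (k : Fin n) + 1) := h k (by omega)
    have hc : a + ((k+1 : ℕ) : Fin n) = a + (k : Fin n) + 1 := by push_cast; ring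
    rw [hc]
    calc H.edist a (a + (k : Fin n) + 1)
        ≤ H.edist a (a + (k : Fin n)) + H.edist (a + (k : Fin n)) (a + (k : Fin n) + 1) :=
          SimpleGraph.edist_triangle
      _ ≤ (k : ℕ∞) + 1 := by
          gcongr
          · exact ih (fun j hj => h j (by omega))
          · exact le_of_eq (SimpleGraph.edist_eq_one_iff_adj.mpr hadj)
      _ = ((k+1 : ℕ) : ℕ∞) := by push_cast; ring

lemma cycle_edist_le (hn : 2 ≤ n) (x : Fin n) (k : ℕ) :
    (cycleGraph n).edist x (x + (k : Fin n)) ≤ (k : ℕ∞) :=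
  edist_forward _ x k (fun j _ => cycle_adj hn _)



lemma deleted_adj_iff (hn : 3 ≤ n) (c x y : Fin n) :
    ((cycleGraph n).deleteEdges {s(c, c+1)}).Adj x y ↔
      (pathGraph n).Adj (x - (c+1)) (y - (c+1)) := by
  have hn2 : 2 ≤ n := by omega
  have h1 := fin_one_val (n := n) hn2
  have hm1 := fin_neg_one_val (n := n) hn2
  rw [deleteEdges_adj, cycleGraph_adj', pathGraph_adj]
  set p := x - (c+1) with hp
  set q := y - (c+1) with hq
  have hx : x = p + (c+1) := by rw [hp]; ring
  have hy : y = q + (c+1) := by rw [hq]; ring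
  have hqp : y - x = q - p := by rw [hp, hq]; ring
  have hpq : x - y = p - q := by rw [hp, hq]; ring
  have hpv := p.isLt
  have hqv := q.isLt
  constructor
  · rintro ⟨hadj, hne⟩
    simp only [Set.mem_singleton_iff] at hne
    rcases hadj with h | h
    · -- (x - y).val = 1 : x = y + 1
      right
      rw [hpq] at h
      have hxy : p = q + 1 := fin_eq_add_one_of_val hn2 h
      by_cases hq1 : q.val + 1 = n
      · exfalso
        have hqe : q = -1 := Fin.ext (by rw [hm1]; omega)
        have hpe : p = 0 := by rw [hxy, hqe]; ring
        apply hne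
        have hxc : x = c + 1 := by rw [hx, hpe]; ring
        have hyc : y = c := by rw [hy, hqe]; ring
        rw [hxc, hyc, Sym2.eq_swap]
      · rw [hxy, Fin.val_add, h1, Nat.mod_eq_of_lt (by omega)]
    · left
      rw [hqp] at h
      have hxy : q = p + 1 := fin_eq_add_one_of_val hn2 h
      by_cases hp1 : p.val + 1 = n
      · exfalso
        have hpe : p = -1 := Fin.ext (by rw [hm1]; omega)
        have hqe : q = 0 := by rw [hxy, hpe]; ring
        apply hne
        have hxc : x = c := by rw [hx, hpe]; ring
        have hyc : y = c + 1 := by rw [hy, hqe]; ring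
        rw [hxc, hyc]
      · rw [hxy, Fin.val_add, h1, Nat.mod_eq_of_lt (by omega)]
  · intro h
    rcases h with h | h
    · -- p.val + 1 = q.val : q = p + 1
      have hq1 : q = p + 1 := Fin.ext (by rw [Fin.val_add, h1, Nat.mod_eq_of_lt (by omega)]; omega)
      refine ⟨Or.inr (by rw [hqp, hq1]; simpa using h1), ?_⟩
      simp only [Set.mem_singleton_iff]
      intro hc
      rw [Sym2.eq, Sym2.rel_iff', Prod.mk.injEq, Prod.swap_prod_mk, Prod.mk.injEq] at hc
      rcases hc with ⟨hxc, hyc⟩ | ⟨hxc, hyc⟩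
      · have hpe : p = -1 := by rw [hp, hxc]; ring
        rw [hpe, hm1] at h
        omega
      · have hpe : p = 0 := by rw [hp, hxc]; ring
        have hqe : q = -1 := by rw [hq, hyc]; ring
        rw [hpe, hqe, hm1, Fin.val_zero] at h
        omega
    · have hp1 : p = q + 1 := Fin.ext (by rw [Fin.val_add, h1, Nat.mod_eq_of_lt (by omega)]; omega)
      refine ⟨Or.inl (by rw [hpq, hp1]; simpa using h1), ?_⟩
      simp only [Set.mem_singleton_iff]
      intro hc
      rw [Sym2.eq, Sym2.rel_iff', Prod.mk.injEq, Prod.swap_prod_mk, Prod.mk.injEq] at hc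
      rcases hc with ⟨hxc, hyc⟩ | ⟨hxc, hyc⟩
      · have hpe : p = -1 := by rw [hp, hxc]; ring
        have hqe : q = 0 := by rw [hq, hyc]; ring
        rw [hpe, hqe, hm1, Fin.val_zero] at h
        omega
      · have hqe : q = -1 := by rw [hq, hyc]; ring
        rw [hqe, hm1] at h
        omega



lemma fin_neg_val {w : Fin n} (hw : w ≠ 0) : ((-w : Fin n)).val = n - w.val := by
  have h0 : (0 : Fin n).val < w.val := by
    have : w.val ≠ 0 := fun h0 => hw (Fin.ext (by rw [h0]; simp))
    simpa using Nat.pos_of_ne_zero this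
  have : (-w : Fin n) = 0 - w := by ring
  rw [this, fin_sub_val_of_lt h0]
  simp

lemma cycle_edist (hn : 2 ≤ n) (x y : Fin n) :
    (cycleGraph n).edist x y = ((min ((y - x : Fin n)).val ((x - y : Fin n)).val : ℕ) : ℕ∞) := by
  refine le_antisymm ?_ (edist_le_sInf_aux fun p => by exact_mod_cast cycle_walk_ge hn p)
  have hle : ∀ a b : ℕ, (cycleGraph n).edist x y ≤ a → (cycleGraph n).edist x y ≤ b →
      (cycleGraph n).edist x y ≤ ((min a b : ℕ) : ℕ∞) := by
    intro a b ha hb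
    rcases min_cases a b with ⟨h, _⟩ | ⟨h, _⟩ <;> rw [h] <;> assumption
  refine hle _ _ ?_ ?_
  · have h1 : x + (((y - x : Fin n)).val : Fin n) = y := by
      rw [Fin.cast_val_eq_self]; ring
    have := cycle_edist_le hn x ((y - x : Fin n)).val
    rwa [h1] at this
  · have h1 : y + (((x - y : Fin n)).val : Fin n) = x := by
      rw [Fin.cast_val_eq_self]; ring
    have := cycle_edist_le hn y ((x - y : Fin n)).val
    rw [h1] at this
    rwa [SimpleGraph.edist_comm] at this

def delIso (hn : 3 ≤ n) (c : Fin n) :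
    ((cycleGraph n).deleteEdges {s(c, c+1)}) ≃g pathGraph n where
  toEquiv := Equiv.subRight (c+1)
  map_rel_iff' := by
    intro a b
    exact (deleted_adj_iff hn c a b).symm

lemma deleted_edist (hn : 3 ≤ n) (c x y : Fin n) :
    ((cycleGraph n).deleteEdges {s(c, c+1)}).edist x y
      = ((Nat.dist ((x - (c+1) : Fin n)).val ((y - (c+1) : Fin n)).val : ℕ) : ℕ∞) := by
  rw [← edist_iso (delIso hn c) x y, pathGraph_edist]
  rfl

-- pure arithmetic
lemma arith (hn : 3 ≤ n) (b : ℕ) (hb : b < n) :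
    (∀ d : ℕ, d < n → min d (n - d) = Nat.dist b ((b + d) % n)) ↔
      (n - 2 ≤ 2 * b ∧ 2 * b ≤ n) := by
  constructor
  · intro h
    constructor
    · have h1 := h (n - 1 - b) (by omega)
      rw [Nat.mod_eq_of_lt (by omega)] at h1
      simp only [Nat.dist] at h1
      omega
    · rcases Nat.eq_zero_or_pos b with rfl | hbp
      · omega
      · have h1 := h (n - b) (by omega)
        rw [(by omega : b + (n - b) = n), Nat.mod_self] at h1
        simp only [Nat.dist] at h1
        omega
  · rintro ⟨h1, h2⟩ d hd
    by_cases hc : b + d < n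
    · rw [Nat.mod_eq_of_lt hc]
      simp only [Nat.dist]
      omega
    · have hm : (b + d) % n = b + d - n := by
        rw [Nat.mod_eq_sub_mod (by omega), Nat.mod_eq_of_lt (by omega)]
      rw [hm]
      simp only [Nat.dist]
      omega

lemma edist_eq_iff (hn : 3 ≤ n) (v c y : Fin n) :
    ((cycleGraph n).edist v y = ((cycleGraph n).deleteEdges {s(c, c+1)}).edist v y)
    ↔ min ((y - v : Fin n)).val (n - ((y - v : Fin n)).val)
        = Nat.dist ((v - (c+1) : Fin n)).val
            ((((v - (c+1) : Fin n)).val + ((y - v : Fin n)).val) % n) := by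
  rw [cycle_edist (by omega) v y, deleted_edist hn c v y, Nat.cast_inj]
  have hmin : min ((y - v : Fin n)).val ((v - y : Fin n)).val
      = min ((y - v : Fin n)).val (n - ((y - v : Fin n)).val) := by
    rcases eq_or_ne y v with rfl | hyv
    · simp
    · have hne : (y - v : Fin n) ≠ 0 := fun hc => hyv (by
        have : y - v + v = 0 + v := by rw [hc]
        simpa using this)
      have : (v - y : Fin n) = -(y - v) := by ring
      rw [this, fin_neg_val hne]
  have hadd : ((y - (c+1) : Fin n)).val
      = (((v - (c+1) : Fin n)).val + ((y - v : Fin n)).val) % n := by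
    have : (y - (c+1) : Fin n) = (v - (c+1)) + (y - v) := by ring
    rw [this, Fin.val_add]
  rw [hmin, hadd]

lemma not_mon_iff (hn : 3 ≤ n) (v c : Fin n) :
    ¬ monitors (cycleGraph n) v (s(c, c+1)) ↔
      (n - 2 ≤ 2 * ((v - (c+1) : Fin n)).val ∧ 2 * ((v - (c+1) : Fin n)).val ≤ n) := by
  rw [← arith hn _ (v - (c+1)).isLt]
  rw [monitors]
  push_neg
  constructor
  · intro h d hd
    have h1 := h (v + (d : Fin n))
    rw [edist_eq_iff hn v c _] at h1
    have h2 : ((v + (d : Fin n) - v : Fin n)).val = d := by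
      have : (v + (d : Fin n) - v : Fin n) = (d : Fin n) := by ring
      rw [this, Fin.val_natCast, Nat.mod_eq_of_lt hd]
    rwa [h2] at h1
  · intro h y
    rw [edist_eq_iff hn v c y]
    exact h _ (y - v).isLt



lemma edge_mem_iff (hn : 3 ≤ n) (e : Sym2 (Fin n)) :
    e ∈ (cycleGraph n).edgeSet ↔ ∃ c : Fin n, e = s(c, c+1) := by
  constructor
  · induction e with
    | _ x y =>
      intro h
      rw [mem_edgeSet, cycleGraph_adj'] at h
      rcases h with h | h
      · exact ⟨y, by rw [fin_eq_add_one_of_val (by omega) h, Sym2.eq_swap]⟩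
      · exact ⟨x, by rw [fin_eq_add_one_of_val (by omega) h]⟩
  · rintro ⟨c, rfl⟩
    exact mem_edgeSet _ |>.mpr (cycle_adj (by omega) c)

lemma F_inj (hn : 3 ≤ n) : Function.Injective (fun c : Fin n => s(c, c+1)) := by
  intro a b hab
  simp only [Sym2.eq, Sym2.rel_iff', Prod.mk.injEq, Prod.swap_prod_mk] at hab
  rcases hab with ⟨h, _⟩ | ⟨h1, h2⟩
  · exact h
  · exfalso
    have h3 : (1 + 1 : Fin n) = 0 := by linear_combination h2 - h1
    have h4 : ((1 + 1 : Fin n)).val = 0 := by rw [h3]; rfl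
    rw [Fin.val_add, fin_one_val (by omega), Nat.mod_eq_of_lt (by omega)] at h4
    omega

theorem stmt10' (hn : 3 ≤ n) (v : Fin n) :
    {e | e ∈ (SimpleGraph.cycleGraph n).edgeSet ∧
        monitors (SimpleGraph.cycleGraph n) v e}.ncard =
      if Odd n then n - 1 else n - 2 := by
  set A : Set (Fin n) := {z | ¬(n - 2 ≤ 2 * z.val ∧ 2 * z.val ≤ n)} with hA
  set B : Set (Fin n) := {c | ¬(n - 2 ≤ 2 * ((v - (c+1) : Fin n)).val
    ∧ 2 * ((v - (c+1) : Fin n)).val ≤ n)} with hB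
  have hmon : ∀ c : Fin n, monitors (cycleGraph n) v (s(c, c+1)) ↔ c ∈ B := by
    intro c
    rw [hB, Set.mem_setOf_eq, ← not_mon_iff hn v c, not_not]
  have hS : {e | e ∈ (SimpleGraph.cycleGraph n).edgeSet ∧
      monitors (SimpleGraph.cycleGraph n) v e} = (fun c : Fin n => s(c, c+1)) '' B := by
    ext e
    simp only [Set.mem_setOf_eq, Set.mem_image]
    constructor
    · rintro ⟨hmem, hm⟩
      obtain ⟨c, rfl⟩ := (edge_mem_iff hn e).mp hmem
      exact ⟨c, (hmon c).mp hm, rfl⟩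
    · rintro ⟨c, hc, rfl⟩
      exact ⟨(edge_mem_iff hn _).mpr ⟨c, rfl⟩, (hmon c).mpr hc⟩
  rw [hS, Set.ncard_image_of_injective _ (F_inj hn)]
  -- B = preimage of A under sub-left equiv
  have hBA : B = ⇑(Equiv.subLeft (v - 1)) ⁻¹' A := by
    ext c
    simp only [hB, hA, Set.mem_setOf_eq, Set.mem_preimage, Equiv.subLeft_apply]
    have : (v - 1 - c : Fin n) = v - (c + 1) := by ring
    rw [this]
  rw [hBA, ← Equiv.image_symm_eq_preimage,
    Set.ncard_image_of_injective _ (Equiv.subLeft (v-1)).symm.injective]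
  -- count A
  have hcompl : Aᶜ = {z : Fin n | n - 2 ≤ 2 * z.val ∧ 2 * z.val ≤ n} := by
    rw [hA, Set.compl_setOf]
    simp only [not_not]
  have hcard : A.ncard + Aᶜ.ncard = n := by
    rw [Set.ncard_add_ncard_compl]
    simp
  rcases Nat.even_or_odd n with he | ho
  · rw [if_neg (by simpa using he)]
    obtain ⟨k, hk⟩ := he
    have hk2 : 2 ≤ k := by omega
    have hcc : Aᶜ = {(⟨k - 1, by omega⟩ : Fin n), (⟨k, by omega⟩ : Fin n)} := by
      ext z
      have hz := z.isLt
      simp only [hA, Set.mem_compl_iff, Set.mem_setOf_eq, not_not, Set.mem_insert_iff,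
        Set.mem_singleton_iff, Fin.ext_iff, Fin.val_mk]
      omega
    have : Aᶜ.ncard = 2 := by
      rw [hcc]
      exact Set.ncard_pair (by simp [Fin.ext_iff]; omega)
    omega
  · rw [if_pos ho]
    obtain ⟨k, hk⟩ := ho
    have hcc : Aᶜ = {(⟨k, by omega⟩ : Fin n)} := by
      ext z
      have hz := z.isLt
      simp only [hA, Set.mem_compl_iff, Set.mem_setOf_eq, not_not,
        Set.mem_singleton_iff, Fin.ext_iff, Fin.val_mk]
      omega
    have : Aᶜ.ncard = 1 := by rw [hcc]; exact Set.ncard_singleton _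
    omega

end helpers

theorem stmt10 (n : ℕ) (hn : 3 ≤ n) (v : Fin n) :
    {e | e ∈ (SimpleGraph.cycleGraph n).edgeSet ∧
        monitors (SimpleGraph.cycleGraph n) v e}.ncard =
      if Odd n then n - 1 else n - 2 := by
  haveI : NeZero n := ⟨by omega⟩
  exact stmt10' hn v
end

section
/- For n ≥ 7, the kipas graph K̂_n (the join of K_1 with the path P_n) satisfies dem(K̂_n) = ⌊n/2⌋. -/
open SimpleGraph

variable {V : Type*}

/-- The kipas graph: the join of a single apex vertex `none` with the path
`P_n` on vertices `some 0, …, some (n-1)`. -/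
def kipas (n : ℕ) : SimpleGraph (Option (Fin n)) :=
  SimpleGraph.fromRel (fun a b =>
    a = none ∨ ∃ i j : Fin n, a = some i ∧ b = some j ∧ (i : ℕ) + 1 = (j : ℕ))

/- ### Auxiliary lemmas -/

private lemma two_le_enat {a : ℕ∞} (h0 : a ≠ 0) (h1 : a ≠ 1) : 2 ≤ a := by
  cases a using ENat.recTopCoe with
  | top => exact le_top
  | coe m =>
    have h0' : m ≠ 0 := by exact_mod_cast h0
    have h1' : m ≠ 1 := by exact_mod_cast h1
    exact_mod_cast by omega

private lemma two_le_edist {G : SimpleGraph V} {u v : V} (hne : u ≠ v)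
    (hnadj : ¬ G.Adj u v) : 2 ≤ G.edist u v :=
  two_le_enat (by simpa [edist_eq_zero_iff] using hne)
    (by simpa [edist_eq_one_iff_adj] using hnadj)

private lemma edist_eq_two_of {G : SimpleGraph V} {u v z : V} (hne : u ≠ v)
    (hnadj : ¬ G.Adj u v) (h1 : G.Adj u z) (h2 : G.Adj z v) : G.edist u v = 2 := by
  refine le_antisymm ?_ (two_le_edist hne hnadj)
  have := edist_le (Walk.cons h1 h2.toWalk)
  simpa using this

private lemma exists_mid_of_edist_eq_two {G : SimpleGraph V} {u v : V}
    (h : G.edist u v = 2) : ∃ z, G.Adj u z ∧ G.Adj z v := by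
  obtain ⟨p, hp⟩ := exists_walk_of_edist_eq_coe (k := 2) (by exact_mod_cast h)
  cases p with
  | nil => simp at hp
  | @cons _ z _ h1 q =>
    cases q with
    | nil => simp at hp
    | @cons _ w _ h2 r =>
      simp only [Walk.length_cons] at hp
      have hr : r.length = 0 := by omega
      have := Walk.eq_of_length_eq_zero hr
      subst this
      exact ⟨z, h1, h2⟩

private lemma kipas_adj {n : ℕ} {a b : Option (Fin n)} : (kipas n).Adj a b ↔
    (∃ i : Fin n, a = none ∧ b = some i) ∨ (∃ i : Fin n, a = some i ∧ b = none) ∨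
    (∃ i j : Fin n, a = some i ∧ b = some j ∧ ((i : ℕ) + 1 = j ∨ (j : ℕ) + 1 = i)) := by
  rw [kipas, fromRel_adj]
  cases a with
  | none =>
    cases b with
    | none => simp
    | some j => simp
  | some i =>
    cases b with
    | none => simp
    | some j =>
      constructor
      · rintro ⟨hne, h⟩
        refine Or.inr (Or.inr ⟨i, j, rfl, rfl, ?_⟩)
        rcases h with (h | ⟨i', j', hi, hj, hh⟩) | (h | ⟨i', j', hi, hj, hh⟩)
        · exact absurd h (by simp)
        · injection hi with hi; injection hj with hj; subst hi; subst hj; exact Or.inl hh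
        · exact absurd h (by simp)
        · injection hi with hi; injection hj with hj; subst hi; subst hj; exact Or.inr hh
      · rintro (⟨i', h, _⟩ | ⟨i', _, h⟩ | ⟨i', j', hi, hj, hh⟩)
        · exact absurd h (by simp)
        · exact absurd h (by simp)
        · injection hi with hi; injection hj with hj; subst hi; subst hj
          refine ⟨?_, ?_⟩
          · intro he
            injection he with he
            subst he
            omega
          · rcases hh with hh | hh
            · exact Or.inl (Or.inr ⟨i, j, rfl, rfl, hh⟩)
            · exact Or.inr (Or.inr ⟨j, i, rfl, rfl, hh⟩)

private lemma kipas_adj_none_some {n : ℕ} (i : Fin n) : (kipas n).Adj none (some i) :=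
  kipas_adj.mpr (Or.inl ⟨i, rfl, rfl⟩)

private lemma kipas_adj_some_none {n : ℕ} (i : Fin n) : (kipas n).Adj (some i) none :=
  kipas_adj.mpr (Or.inr (Or.inl ⟨i, rfl, rfl⟩))

private lemma kipas_adj_some_some {n : ℕ} {i j : Fin n}
    (h : (i : ℕ) + 1 = j ∨ (j : ℕ) + 1 = i) : (kipas n).Adj (some i) (some j) :=
  kipas_adj.mpr (Or.inr (Or.inr ⟨i, j, rfl, rfl, h⟩))

private lemma kipas_not_adj_some_some {n : ℕ} {i j : Fin n}
    (h1 : (i : ℕ) + 1 ≠ j) (h2 : (j : ℕ) + 1 ≠ i) : ¬ (kipas n).Adj (some i) (some j) := by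
  intro h
  rcases kipas_adj.mp h with ⟨_, h', _⟩ | ⟨_, _, h'⟩ | ⟨i', j', hi, hj, hh⟩
  · exact absurd h' (by simp)
  · exact absurd h' (by simp)
  · injection hi with hi; injection hj with hj; subst hi; subst hj
    omega

/-- A vertex monitors any incident edge. -/
private lemma monitors_endpoint {G : SimpleGraph V} {x y : V} (h : G.Adj x y) :
    monitors G x s(x, y) := by
  refine ⟨y, ?_⟩
  rw [edist_eq_one_iff_adj.mpr h]
  intro heq
  have := edist_eq_one_iff_adj.mp heq.symm
  rw [deleteEdges_adj] at this
  exact this.2 (by simp)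

/-- Only the endpoints monitor a path edge of the kipas. -/
private lemma not_monitors_path_edge {n : ℕ} {i j : Fin n} (_hij : (i : ℕ) + 1 = j)
    {x : Option (Fin n)} (hx1 : x ≠ some i) (hx2 : x ≠ some j) :
    ¬ monitors (kipas n) x s(some i, some j) := by
  rintro ⟨y, hy⟩
  apply hy
  set G := kipas n
  set G' := G.deleteEdges {s(some i, some j)} with hG'
  by_cases hxy : x = y
  · subst hxy; rw [edist_self, edist_self]
  by_cases hadj : G.Adj x y
  · have hne : s(x, y) ≠ s(some i, some j) := by
      intro hs
      rw [Sym2.eq_iff] at hs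
      rcases hs with ⟨rfl, rfl⟩ | ⟨rfl, rfl⟩ <;> simp at hx1 hx2
    have hadj' : G'.Adj x y := by
      rw [hG', deleteEdges_adj]
      exact ⟨hadj, by simpa using hne⟩
    rw [edist_eq_one_iff_adj.mpr hadj, edist_eq_one_iff_adj.mpr hadj']
  · -- both distances are 2, via the apex `none`
    have hxs : ∃ p : Fin n, x = some p := by
      cases x with
      | none =>
        cases y with
        | none => exact absurd rfl hxy
        | some q => exact absurd (kipas_adj_none_some q) hadj
      | some p => exact ⟨p, rfl⟩
    have hys : ∃ q : Fin n, y = some q := by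
      cases y with
      | none =>
        cases x with
        | none => exact absurd rfl hxy
        | some p => exact absurd (kipas_adj_some_none p) hadj
      | some q => exact ⟨q, rfl⟩
    obtain ⟨p, rfl⟩ := hxs
    obtain ⟨q, rfl⟩ := hys
    have h1 : G.Adj (some p) none := kipas_adj_some_none p
    have h2 : G.Adj none (some q) := kipas_adj_none_some q
    have h1' : G'.Adj (some p) none := by
      rw [hG', deleteEdges_adj]
      refine ⟨h1, ?_⟩
      intro hs
      rw [Set.mem_singleton_iff, Sym2.eq_iff] at hs
      rcases hs with ⟨_, h⟩ | ⟨_, h⟩ <;> exact absurd h (by simp)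
    have h2' : G'.Adj none (some q) := by
      rw [hG', deleteEdges_adj]
      refine ⟨h2, ?_⟩
      intro hs
      rw [Set.mem_singleton_iff, Sym2.eq_iff] at hs
      rcases hs with ⟨h, _⟩ | ⟨h, _⟩ <;> exact absurd h (by simp)
    have hadj' : ¬ G'.Adj (some p) (some q) :=
      fun h => hadj (G.deleteEdges_le _ h)
    rw [edist_eq_two_of hxy hadj h1 h2, edist_eq_two_of hxy hadj' h1' h2']

private lemma monitors_spoke_far {n : ℕ} {i j : Fin n}
    (hfar : (i : ℕ) + 3 ≤ j ∨ (j : ℕ) + 3 ≤ i) :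
    monitors (kipas n) (some j) s(none, some i) := by
  refine ⟨some i, ?_⟩
  have hne : (some j : Option (Fin n)) ≠ some i := by
    intro h; injection h with h; subst h; omega
  have hnadj : ¬ (kipas n).Adj (some j) (some i) :=
    kipas_not_adj_some_some (by omega) (by omega)
  rw [edist_eq_two_of hne hnadj (kipas_adj_some_none j) (kipas_adj_none_some i)]
  intro heq
  obtain ⟨z, hz1, hz2⟩ := exists_mid_of_edist_eq_two heq.symm
  cases z with
  | none =>
    rw [deleteEdges_adj] at hz2
    exact hz2.2 (by simp)
  | some k =>
    have h1 := (kipas n).deleteEdges_le _ hz1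
    have h2 := (kipas n).deleteEdges_le _ hz2
    rcases kipas_adj.mp h1 with ⟨_, h', _⟩ | ⟨_, _, h'⟩ | ⟨i1, j1, ha1, hb1, hh1⟩
    · exact absurd h' (by simp)
    · exact absurd h' (by simp)
    rcases kipas_adj.mp h2 with ⟨_, h', _⟩ | ⟨_, _, h'⟩ | ⟨i2, j2, ha2, hb2, hh2⟩
    · exact absurd h' (by simp)
    · exact absurd h' (by simp)
    injection ha1 with ha1; injection hb1 with hb1
    injection ha2 with ha2; injection hb2 with hb2
    subst ha1; subst hb1; subst ha2; subst hb2
    omega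

theorem stmt11 (n : ℕ) (hn : 7 ≤ n) : dem (kipas n) = n / 2 := by
  set M : Set (Option (Fin n)) := {x | ∃ i : Fin n, x = some i ∧ (i : ℕ) % 2 = 1} with hMdef
  have hMcard : M.ncard = n / 2 := by
    have hf : Function.Injective (fun k : Fin (n / 2) =>
        (some (⟨2 * (k : ℕ) + 1, by omega⟩ : Fin n) : Option (Fin n))) := by
      intro k k' h
      simp only [Option.some.injEq, Fin.mk.injEq] at h
      exact Fin.ext (by omega)
    have hMrange : M = Set.range (fun k : Fin (n / 2) =>
        (some (⟨2 * (k : ℕ) + 1, by omega⟩ : Fin n) : Option (Fin n))) := by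
      ext x
      simp only [hMdef, Set.mem_setOf_eq, Set.mem_range]
      constructor
      · rintro ⟨i, rfl, hodd⟩
        have hk : (i : ℕ) / 2 < n / 2 := by omega
        refine ⟨⟨(i : ℕ) / 2, hk⟩, ?_⟩
        simp only [Option.some.injEq]
        exact Fin.ext (by simp only [Fin.val_mk]; omega)
      · rintro ⟨k, rfl⟩
        exact ⟨⟨2 * (k : ℕ) + 1, by omega⟩, rfl, by simp only [Fin.val_mk]; omega⟩
    rw [hMrange, ← Nat.card_coe_set_eq, Nat.card_range_of_injective hf,
      Nat.card_eq_fintype_card, Fintype.card_fin]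
  have hDEM : IsDEMSet (kipas n) M := by
    have spoke : ∀ i : Fin n, ∃ x ∈ M, monitors (kipas n) x s(none, some i) := by
      intro i
      by_cases hodd : (i : ℕ) % 2 = 1
      · refine ⟨some i, ⟨i, rfl, hodd⟩, ?_⟩
        have h := monitors_endpoint (kipas_adj_some_none i)
        rwa [Sym2.eq_swap] at h
      · by_cases hlt : (i : ℕ) < 3
        · refine ⟨some ⟨5, by omega⟩, ⟨⟨5, by omega⟩, rfl, by simp only [Fin.val_mk]⟩, ?_⟩
          exact monitors_spoke_far (Or.inl (by simp only [Fin.val_mk]; omega))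
        · refine ⟨some ⟨1, by omega⟩, ⟨⟨1, by omega⟩, rfl, by simp only [Fin.val_mk]⟩, ?_⟩
          exact monitors_spoke_far (Or.inr (by simp only [Fin.val_mk]; omega))
    intro e he
    induction e using Sym2.ind with
    | _ a b =>
      rw [mem_edgeSet] at he
      rcases kipas_adj.mp he with ⟨i, rfl, rfl⟩ | ⟨i, rfl, rfl⟩ | ⟨i, j, rfl, rfl, hh⟩
      · exact spoke i
      · rw [Sym2.eq_swap]
        exact spoke i
      · have hodd : (i : ℕ) % 2 = 1 ∨ (j : ℕ) % 2 = 1 := by omega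
        rcases hodd with hodd | hodd
        · exact ⟨some i, ⟨i, rfl, hodd⟩, monitors_endpoint he⟩
        · refine ⟨some j, ⟨j, rfl, hodd⟩, ?_⟩
          have h := monitors_endpoint he.symm
          rwa [Sym2.eq_swap] at h
  have hmem : n / 2 ∈ {k | ∃ M : Set (Option (Fin n)), M.ncard = k ∧ IsDEMSet (kipas n) M} :=
    ⟨M, hMcard, hDEM⟩
  have hlb : ∀ m ∈ {k | ∃ M : Set (Option (Fin n)), M.ncard = k ∧ IsDEMSet (kipas n) M},
      n / 2 ≤ m := by
    rintro m ⟨N, rfl, hN⟩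
    have H : ∀ k : Fin (n / 2), ∃ x, x ∈ N ∧
        (x = some (⟨2 * (k : ℕ), by omega⟩ : Fin n) ∨
          x = some (⟨2 * (k : ℕ) + 1, by omega⟩ : Fin n)) := by
      intro k
      have hadj : (kipas n).Adj (some (⟨2 * (k : ℕ), by omega⟩ : Fin n))
          (some (⟨2 * (k : ℕ) + 1, by omega⟩ : Fin n)) :=
        kipas_adj_some_some (Or.inl rfl)
      obtain ⟨x, hxN, hxm⟩ := hN _ (((kipas n).mem_edgeSet).mpr hadj)
      refine ⟨x, hxN, ?_⟩
      by_contra hcon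
      push_neg at hcon
      exact not_monitors_path_edge rfl hcon.1 hcon.2 hxm
    choose f hfN hfval using H
    have hfinj : Function.Injective f := by
      intro k k' h
      rcases hfval k with h1 | h1 <;> rcases hfval k' with h2 | h2 <;>
      · have he := h1.symm.trans (h.trans h2)
        simp only [Option.some.injEq, Fin.mk.injEq] at he
        exact Fin.ext (by omega)
    calc n / 2 = (Set.range f).ncard := by
          rw [← Nat.card_coe_set_eq, Nat.card_range_of_injective hfinj,
            Nat.card_eq_fintype_card, Fintype.card_fin]
      _ ≤ N.ncard := Set.ncard_le_ncard (Set.range_subset_iff.mpr hfN) N.toFinite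
  unfold dem
  exact le_antisymm (Nat.sInf_le hmem) (le_csInf ⟨n / 2, hmem⟩ hlb)
end

section
/- For every positive integer k, there exist a connected graph G and a vertex v ∈ V(G) such that dem(G) - dem(G \ v) ≥ k, where G \ v denotes the graph obtained by deleting v and all its incident edges. -/
open SimpleGraph

variable {V : Type*}

/-- The universal set is always a DEM set. -/
lemma univ_isDEMSet (G : SimpleGraph V) : IsDEMSet G Set.univ := by
  intro e he
  induction e with
  | h x y =>
    refine ⟨x, Set.mem_univ x, y, ?_⟩
    rw [mem_edgeSet] at he
    rw [edist_eq_one_iff_adj.mpr he]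
    intro h
    have : (G.deleteEdges {s(x,y)}).Adj x y := edist_eq_one_iff_adj.mp h.symm
    simp [deleteEdges_adj] at this

/-- The kipas graph: apex 0, path 1..2k+2. -/
def kip (k : ℕ) : SimpleGraph (Fin (2*k+3)) :=
  SimpleGraph.fromRel (fun x y => x.val = 0 ∨ x.val + 1 = y.val)

lemma kip_adj (k : ℕ) (x y : Fin (2*k+3)) :
    (kip k).Adj x y ↔ x ≠ y ∧ (x.val = 0 ∨ x.val + 1 = y.val ∨ y.val = 0 ∨ y.val + 1 = x.val) := by
  simp [kip, fromRel_adj]; tauto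

/-- In a graph with a dominating vertex, nonequal nonadjacent vertices are at distance 2. -/
lemma edist_eq_two_of_dominating {H : SimpleGraph V} {a : V} (ha : ∀ z, z ≠ a → H.Adj a z)
    {x y : V} (hxy : x ≠ y) (hadj : ¬ H.Adj x y) : H.edist x y = 2 := by
  have hxa : x ≠ a := by rintro rfl; exact hadj (ha y hxy.symm)
  have hya : y ≠ a := by rintro rfl; exact hadj (ha x hxy).symm
  have h2 : H.edist x y ≤ 2 := by
    calc H.edist x y ≤ H.edist x a + H.edist a y := SimpleGraph.edist_triangle
    _ ≤ 1 + 1 := by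
        gcongr
        · exact le_of_eq (edist_eq_one_iff_adj.mpr (ha x hxa).symm)
        · exact le_of_eq (edist_eq_one_iff_adj.mpr (ha y hya))
    _ = 2 := by norm_num
  have h0 : H.edist x y ≠ 0 := fun h => hxy (edist_eq_zero_iff.mp h)
  have h1 : H.edist x y ≠ 1 := fun h => hadj (edist_eq_one_iff_adj.mp h)
  have hne : H.edist x y ≠ ⊤ := by
    intro h; rw [h] at h2; exact absurd h2 (by simp)
  lift H.edist x y to ℕ using hne with d hd
  have c2 : d ≤ 2 := by exact_mod_cast h2
  have c0 : d ≠ 0 := by exact_mod_cast h0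
  have c1 : d ≠ 1 := by exact_mod_cast h1
  have : d = 2 := by omega
  exact_mod_cast congrArg (Nat.cast : ℕ → ℕ∞) this

lemma kip_apex_adj (k : ℕ) (z : Fin (2*k+3)) (hz : z ≠ ⟨0, by omega⟩) :
    (kip k).Adj ⟨0, by omega⟩ z := by
  rw [kip_adj]
  exact ⟨Ne.symm hz, Or.inl rfl⟩

/-- Only endpoints monitor a path edge of the kipas. -/
lemma kip_monitor_mem (k : ℕ) (i : ℕ) (hi : 1 ≤ i) (hi2 : i + 1 ≤ 2*k+2)
    (z : Fin (2*k+3)) (hz : monitors (kip k) z s((⟨i, by omega⟩ : Fin (2*k+3)), ⟨i+1, by omega⟩)) :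
    z = (⟨i, by omega⟩ : Fin (2*k+3)) ∨ z = (⟨i+1, by omega⟩ : Fin (2*k+3)) := by
  by_contra hc
  push_neg at hc
  obtain ⟨hz1, hz2⟩ := hc
  set p : Fin (2*k+3) := ⟨i, by omega⟩ with hp
  set q : Fin (2*k+3) := ⟨i+1, by omega⟩ with hq
  set G := kip k
  set G' := G.deleteEdges {s(p,q)} with hG'
  obtain ⟨y, hy⟩ := hz
  apply hy
  -- adjacency from z is unchanged
  have hadj : ∀ w, G'.Adj z w ↔ G.Adj z w := by
    intro w
    rw [hG', deleteEdges_adj]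
    simp only [Set.mem_singleton_iff]
    constructor
    · exact fun h => h.1
    · intro h
      refine ⟨h, fun he => ?_⟩
      rcases Sym2.eq_iff.mp he with ⟨h1, _⟩ | ⟨h1, _⟩
      · exact hz1 h1
      · exact hz2 h1
  have ha' : ∀ w, w ≠ (⟨0, by omega⟩ : Fin (2*k+3)) → G'.Adj ⟨0, by omega⟩ w := by
    intro w hw
    rw [hG', deleteEdges_adj]
    refine ⟨kip_apex_adj k w hw, ?_⟩
    simp only [Set.mem_singleton_iff]
    intro he
    rcases Sym2.eq_iff.mp he with ⟨h1, _⟩ | ⟨h1, _⟩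
    · exact absurd (congrArg Fin.val h1) (by simp [hp]; omega)
    · exact absurd (congrArg Fin.val h1) (by simp)
  have ha : ∀ w, w ≠ (⟨0, by omega⟩ : Fin (2*k+3)) → G.Adj ⟨0, by omega⟩ w :=
    kip_apex_adj k
  by_cases hzy : z = y
  · subst hzy; simp [SimpleGraph.edist_self]
  by_cases hA : G.Adj z y
  · rw [edist_eq_one_iff_adj.mpr hA, edist_eq_one_iff_adj.mpr ((hadj y).mpr hA)]
  · rw [edist_eq_two_of_dominating ha hzy hA,
      edist_eq_two_of_dominating ha' hzy (fun h => hA ((hadj y).mp h))]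

/-- dem lower bound for the kipas. -/
lemma kip_dem_lb (k : ℕ) : k + 1 ≤ dem (kip k) := by
  have hne : {n | ∃ M : Set (Fin (2*k+3)), M.ncard = n ∧ IsDEMSet (kip k) M}.Nonempty :=
    ⟨(Set.univ : Set (Fin (2*k+3))).ncard, Set.univ, rfl, univ_isDEMSet _⟩
  refine le_csInf hne ?_
  rintro n ⟨M, rfl, hM⟩
  -- for each j : Fin (k+1), edge between 2j+1 and 2j+2
  have hbound : ∀ j : Fin (k+1), 2 * j.val + 2 < 2*k+3 := fun j => by omega
  set P : Fin (k+1) → Fin (2*k+3) := fun j => ⟨2*j.val+1, by omega⟩ with hP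
  set Q : Fin (k+1) → Fin (2*k+3) := fun j => ⟨2*j.val+2, by omega⟩ with hQ
  have hedge : ∀ j : Fin (k+1), s(P j, Q j) ∈ (kip k).edgeSet := by
    intro j
    rw [mem_edgeSet, kip_adj]
    constructor
    · intro h; exact absurd (congrArg Fin.val h) (by simp [hP, hQ])
    · right; left; rfl
  have hpick : ∀ j : Fin (k+1), ∃ x ∈ M, x = P j ∨ x = Q j := by
    intro j
    obtain ⟨x, hxM, hx⟩ := hM _ (hedge j)
    exact ⟨x, hxM, kip_monitor_mem k (2*j.val+1) (by omega) (by omega) x hx⟩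
  choose f hfM hf using hpick
  have hval : ∀ j, (f j).val = 2*j.val+1 ∨ (f j).val = 2*j.val+2 := by
    intro j
    rcases hf j with h | h
    · left; rw [h]
    · right; rw [h]
  have hinj : Function.Injective f := by
    intro j j' h
    have := congrArg Fin.val h
    rcases hval j with h1 | h1 <;> rcases hval j' with h2 | h2 <;>
      (rw [h1, h2] at this; exact Fin.ext (by omega))
  have hsub : Set.range f ⊆ M := by rintro x ⟨j, rfl⟩; exact hfM j
  calc k + 1 = (Set.range f).ncard := by
        rw [← Set.image_univ, Set.ncard_image_of_injective _ hinj, Set.ncard_univ]; simp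
    _ ≤ M.ncard := Set.ncard_le_ncard hsub (Set.toFinite M)

def apx (k : ℕ) : Fin (2*k+3) := ⟨0, by omega⟩

lemma kip_connected (k : ℕ) : (kip k).Connected := by
  rw [connected_iff]
  refine ⟨fun x y => ?_, ⟨apx k⟩⟩
  have reach : ∀ z, (kip k).Reachable z (apx k) := by
    intro z
    by_cases h : z = apx k
    · rw [h]
    · exact ((kip_apex_adj k z h).symm).reachable
  exact (reach x).trans (reach y).symm

abbrev pvert (k : ℕ) := ↥{w : Fin (2*k+3) | w ≠ apx k}

noncomputable abbrev pgraph (k : ℕ) : SimpleGraph (pvert k) :=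
  SimpleGraph.induce {w | w ≠ apx k} (kip k)

def pone (k : ℕ) : pvert k :=
  ⟨⟨1, by omega⟩, fun h => absurd (congrArg Fin.val h) (by simp [apx])⟩

lemma pvert_val_ne (k : ℕ) (z : pvert k) : (z : Fin (2*k+3)).val ≠ 0 := by
  intro h
  exact z.2 (Fin.ext h)

lemma pgraph_adj (k : ℕ) (a b : pvert k) :
    (pgraph k).Adj a b ↔
      (a : Fin (2*k+3)).val + 1 = (b : Fin (2*k+3)).val ∨
      (b : Fin (2*k+3)).val + 1 = (a : Fin (2*k+3)).val := by
  show (kip k).Adj a b ↔ _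
  rw [kip_adj]
  have ha := pvert_val_ne k a
  have hb := pvert_val_ne k b
  constructor
  · rintro ⟨-, h⟩; omega
  · intro h
    refine ⟨fun he => ?_, by omega⟩
    have := congrArg Fin.val he
    omega

lemma pgraph_reach (k : ℕ) (z : pvert k) : (pgraph k).Reachable (pone k) z := by
  obtain ⟨⟨m, hm⟩, hz⟩ := z
  have hm1 : 1 ≤ m := by
    have := pvert_val_ne k ⟨⟨m, hm⟩, hz⟩
    simp at this; omega
  have key : ∀ m (h1 : 1 ≤ m) (hm : m < 2*k+3),
      (pgraph k).Reachable (pone k) ⟨⟨m, hm⟩, fun h => absurd (congrArg Fin.val h) (by simp [apx]; omega)⟩ := by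
    intro m h1
    induction m, h1 using Nat.le_induction with
    | base => intro hm; exact Reachable.refl _
    | succ m h1 ih =>
      intro hm
      have hm' : m < 2*k+3 := by omega
      refine (ih hm').trans (Adj.reachable ?_)
      rw [pgraph_adj]
      left; rfl
  exact key m hm1 hm

lemma pgraph_dem_ub (k : ℕ) : dem (pgraph k) ≤ 1 := by
  apply Nat.sInf_le
  refine ⟨{pone k}, Set.ncard_singleton _, ?_⟩
  have mon : ∀ (u w : pvert k), (u : Fin (2*k+3)).val + 1 = (w : Fin (2*k+3)).val →
      monitors (pgraph k) (pone k) s(u, w) := by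
    intro u w huw
    set G' := (pgraph k).deleteEdges {s(u,w)} with hG'
    have hu1 : 1 ≤ (u : Fin (2*k+3)).val := by
      have := pvert_val_ne k u; omega
    have closed : ∀ a b : pvert k, (a : Fin (2*k+3)).val ≤ (u : Fin (2*k+3)).val →
        G'.Adj a b → (b : Fin (2*k+3)).val ≤ (u : Fin (2*k+3)).val := by
      intro a b hab hAdj
      rw [hG', deleteEdges_adj] at hAdj
      obtain ⟨hA, hne⟩ := hAdj
      rw [pgraph_adj] at hA
      simp only [Set.mem_singleton_iff] at hne
      rcases hA with h | h
      · -- a + 1 = b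
        by_cases hbu : (b : Fin (2*k+3)).val = (u : Fin (2*k+3)).val + 1
        · exfalso
          apply hne
          have hbw : b = w := Subtype.ext (Fin.ext (by omega))
          have hau : a = u := Subtype.ext (Fin.ext (by omega))
          rw [hbw, hau]
        · omega
      · omega
    have walkcl : ∀ (a b : pvert k) (p : G'.Walk a b),
        (a : Fin (2*k+3)).val ≤ (u : Fin (2*k+3)).val →
        (b : Fin (2*k+3)).val ≤ (u : Fin (2*k+3)).val := by
      intro a b p
      induction p with
      | nil => exact id
      | cons h p ih => intro ha; exact ih (closed _ _ ha h)
    have hnr : ¬ G'.Reachable (pone k) w := by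
      intro r
      obtain ⟨p⟩ := r
      have := walkcl _ _ p (by simp [pone]; omega)
      omega
    refine ⟨w, ?_⟩
    rw [← hG', edist_eq_top_of_not_reachable hnr]
    exact edist_ne_top_iff_reachable.mpr (pgraph_reach k w)
  intro e he
  induction e with
  | h u w =>
    rw [mem_edgeSet, pgraph_adj] at he
    refine ⟨pone k, rfl, ?_⟩
    rcases he with h | h
    · exact mon u w h
    · rw [Sym2.eq_swap]; exact mon w u h

theorem stmt12 (k : ℕ) (hk : 1 ≤ k) :
    ∃ (n : ℕ) (G : SimpleGraph (Fin n)) (v : Fin n), G.Connected ∧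
      dem G - dem (SimpleGraph.induce {w | w ≠ v} G) ≥ k := by
  refine ⟨2*k+3, kip k, apx k, kip_connected k, ?_⟩
  have h1 := kip_dem_lb k
  have h2 := pgraph_dem_ub k
  simp only [pgraph] at h2
  omega
end

section
/- For every positive integer k, there exist a connected graph H and a vertex v ∈ V(H) such that dem(H \ v) - dem(H) ≥ k. -/
open SimpleGraph

variable {V : Type*}

/-! ### Auxiliary general lemmas -/

lemma closed_walk {α : Type*} {G : SimpleGraph α} {S : Set α}
    (hS : ∀ a b, G.Adj a b → a ∈ S → b ∈ S) :
    ∀ {x y : α}, G.Walk x y → x ∈ S → y ∈ S := by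
  intro x y p
  induction p with
  | nil => exact id
  | cons h p ih => exact fun hx => ih (hS _ _ h hx)

lemma not_reachable_of_closed {α : Type*} {G : SimpleGraph α} {S : Set α}
    (hS : ∀ a b, G.Adj a b → a ∈ S → b ∈ S) {x y : α} (hx : x ∈ S) (hy : y ∉ S) :
    ¬ G.Reachable x y := fun h => h.elim fun p => hy (closed_walk hS p hx)

lemma isDEMSet_univ_s13 {α : Type*} (G : SimpleGraph α) : IsDEMSet G Set.univ := by
  intro e he
  induction e with
  | _ a b =>
    refine ⟨a, Set.mem_univ a, b, ?_⟩
    rw [SimpleGraph.mem_edgeSet] at he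
    rw [SimpleGraph.edist_eq_one_iff_adj.mpr he]
    intro h
    have : (G.deleteEdges {s(a,b)}).Adj a b := SimpleGraph.edist_eq_one_iff_adj.mp h.symm
    rw [SimpleGraph.deleteEdges_adj] at this
    exact this.2 rfl

/-! ### The construction -/

def Hgraph (n : ℕ) : SimpleGraph (Fin n) :=
  SimpleGraph.fromRel (fun a b => (a.val = 0 ∧ b.val % 2 = 1) ∨ (a.val % 2 = 1 ∧ b.val = a.val + 1))

lemma Hadj {n : ℕ} {a b : Fin n} :
    (Hgraph n).Adj a b ↔ a.val ≠ b.val ∧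
      ((a.val = 0 ∧ b.val % 2 = 1) ∨ (a.val % 2 = 1 ∧ b.val = a.val + 1) ∨
       (b.val = 0 ∧ a.val % 2 = 1) ∨ (b.val % 2 = 1 ∧ a.val = b.val + 1)) := by
  rw [Hgraph, SimpleGraph.fromRel_adj]
  constructor
  · rintro ⟨hne, h⟩
    exact ⟨fun h' => hne (Fin.ext h'), by tauto⟩
  · rintro ⟨hne, h⟩
    exact ⟨fun h' => hne (by rw [h']), by tauto⟩

lemma Hconn {n : ℕ} (hn : n % 2 = 1) : (Hgraph n).Connected := by
  have h1 : 1 ≤ n := by omega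
  have reach : ∀ w : Fin n, (Hgraph n).Reachable ⟨0, by omega⟩ w := by
    intro w
    rcases Nat.lt_or_ge w.val 1 with hw | hw
    · have : w = ⟨0, by omega⟩ := Fin.ext (by simpa using by omega)
      rw [this]
    · rcases Nat.even_or_odd w.val with he | ho
      · have hwn : w.val < n := w.isLt
        have hv : w.val % 2 = 0 := Nat.even_iff.mp he
        have h01 : (Hgraph n).Adj ⟨0, by omega⟩ ⟨w.val - 1, by omega⟩ := by
          rw [Hadj]; simp only [Fin.val_mk, true_and, and_true] <;> omega
        have h12 : (Hgraph n).Adj ⟨w.val - 1, by omega⟩ w := by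
          rw [Hadj]; simp only [Fin.val_mk, true_and, and_true] <;> omega
        exact (h01.reachable).trans h12.reachable
      · have ho' : w.val % 2 = 1 := Nat.odd_iff.mp ho
        have : (Hgraph n).Adj ⟨0, by omega⟩ w := by
          rw [Hadj]; simp only [Fin.val_mk, true_and, and_true] <;> omega
        exact this.reachable
  rw [SimpleGraph.connected_iff]
  exact ⟨fun a b => (reach a).symm.trans (reach b), ⟨⟨0, by omega⟩⟩⟩

lemma edgeval {n : ℕ} {a b : Fin n} (p q : Fin n)
    (hpq : s(p,q) ∉ ({s(a,b)} : Set (Sym2 (Fin n)))) :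
    ¬((p.val = a.val ∧ q.val = b.val) ∨ (p.val = b.val ∧ q.val = a.val)) := by
  intro h
  apply hpq
  simp only [Set.mem_singleton_iff, Sym2.eq_iff]
  rcases h with ⟨h1, h2⟩ | ⟨h1, h2⟩
  · exact Or.inl ⟨Fin.ext h1, Fin.ext h2⟩
  · exact Or.inr ⟨Fin.ext h1, Fin.ext h2⟩

/-- case: edge incident to the center. -/
lemma mon_case1 {n : ℕ} (hn : n % 2 = 1) {a b : Fin n} (ha : a.val = 0) (hb : b.val % 2 = 1) :
    monitors (Hgraph n) ⟨0, by omega⟩ s(a, b) := by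
  set H := Hgraph n with hH
  set G' := H.deleteEdges {s(a,b)} with hG'
  have hav0 : a = ⟨0, by omega⟩ := Fin.ext (by simpa using ha)
  have hadj : H.Adj a b := by rw [hH, Hadj]; omega
  refine ⟨b, ?_⟩
  have h1 : H.edist ⟨0, by omega⟩ b = 1 := by
    rw [SimpleGraph.edist_eq_one_iff_adj]; rwa [hav0] at hadj
  have hclosed : ∀ p q : Fin n, G'.Adj p q →
      p ∈ {w : Fin n | w.val = b.val ∨ w.val = b.val + 1} →
      q ∈ {w : Fin n | w.val = b.val ∨ w.val = b.val + 1} := by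
    intro p q h hp
    rw [hG', SimpleGraph.deleteEdges_adj] at h
    obtain ⟨hpq, hnd⟩ := h
    rw [hH, Hadj] at hpq
    have hval := edgeval p q hnd
    simp only [Set.mem_setOf_eq] at hp ⊢
    omega
  have hnS : (⟨0, by omega⟩ : Fin n) ∉ {w : Fin n | w.val = b.val ∨ w.val = b.val + 1} := by
    simp only [Set.mem_setOf_eq, Fin.val_mk]
    omega
  have hbS : b ∈ {w : Fin n | w.val = b.val ∨ w.val = b.val + 1} := Or.inl rfl
  have hnr : ¬ G'.Reachable ⟨0, by omega⟩ b :=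
    fun h => (not_reachable_of_closed hclosed hbS hnS) h.symm
  rw [h1, SimpleGraph.edist_eq_top_of_not_reachable hnr]
  simp

/-- case: matching edge. -/
lemma mon_case2 {n : ℕ} (hn : n % 2 = 1) {a b : Fin n} (ha : a.val % 2 = 1)
    (hb : b.val = a.val + 1) :
    monitors (Hgraph n) ⟨0, by omega⟩ s(a, b) := by
  set H := Hgraph n with hH
  set G' := H.deleteEdges {s(a,b)} with hG'
  refine ⟨b, ?_⟩
  have h1 : H.edist ⟨0, by omega⟩ b ≠ ⊤ :=
    SimpleGraph.edist_ne_top_iff_reachable.mpr ((Hconn hn).preconnected _ _)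
  have hclosed : ∀ p q : Fin n, G'.Adj p q →
      p ∈ {w : Fin n | w.val = b.val} → q ∈ {w : Fin n | w.val = b.val} := by
    intro p q h hp
    rw [hG', SimpleGraph.deleteEdges_adj] at h
    obtain ⟨hpq, hnd⟩ := h
    rw [hH, Hadj] at hpq
    have hval := edgeval p q hnd
    simp only [Set.mem_setOf_eq] at hp ⊢
    omega
  have hnS : (⟨0, by omega⟩ : Fin n) ∉ {w : Fin n | w.val = b.val} := by
    simp only [Set.mem_setOf_eq, Fin.val_mk]
    omega
  have hnr : ¬ G'.Reachable ⟨0, by omega⟩ b :=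
    fun h => (not_reachable_of_closed hclosed rfl hnS) h.symm
  rw [SimpleGraph.edist_eq_top_of_not_reachable hnr]
  exact h1

lemma v0_monitors {n : ℕ} (hn : n % 2 = 1) {a b : Fin n} (hab : (Hgraph n).Adj a b) :
    monitors (Hgraph n) ⟨0, by omega⟩ s(a, b) := by
  have h := (Hadj.mp hab).2
  rcases h with ⟨h1, h2⟩ | ⟨h1, h2⟩ | ⟨h1, h2⟩ | ⟨h1, h2⟩
  · exact mon_case1 hn h1 h2
  · exact mon_case2 hn h1 h2
  · rw [Sym2.eq_swap]; exact mon_case1 hn h1 h2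
  · rw [Sym2.eq_swap]; exact mon_case2 hn h1 h2

lemma demH_le_one {n : ℕ} (hn : n % 2 = 1) : dem (Hgraph n) ≤ 1 := by
  apply Nat.sInf_le
  refine ⟨{⟨0, by omega⟩}, Set.ncard_singleton _, ?_⟩
  intro e he
  induction e with
  | _ a b =>
    rw [SimpleGraph.mem_edgeSet] at he
    exact ⟨_, Set.mem_singleton _, v0_monitors hn he⟩

def v0 (k : ℕ) : Fin (2*k+3) := ⟨0, by omega⟩

def G2 (k : ℕ) : SimpleGraph ({w : Fin (2*k+3) | w ≠ v0 k} : Set (Fin (2*k+3))) :=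
  SimpleGraph.induce {w | w ≠ v0 k} (Hgraph (2*k+3))

lemma G2_adj {k : ℕ} {a b : ({w : Fin (2*k+3) | w ≠ v0 k} : Set (Fin (2*k+3)))} :
    (G2 k).Adj a b ↔ (Hgraph (2*k+3)).Adj ↑a ↑b := Iff.rfl

lemma nz {k : ℕ} (a : ({w : Fin (2*k+3) | w ≠ v0 k} : Set (Fin (2*k+3)))) :
    (a : Fin (2*k+3)).val ≠ 0 := by
  intro h
  exact a.2 (Fin.ext (by simpa [v0] using h))

lemma nbr {k : ℕ} {a b : ({w : Fin (2*k+3) | w ≠ v0 k} : Set (Fin (2*k+3)))}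
    (h : (G2 k).Adj a b) :
    ((a : Fin (2*k+3)).val % 2 = 1 ∧ (b : Fin (2*k+3)).val = (a : Fin (2*k+3)).val + 1) ∨
    ((b : Fin (2*k+3)).val % 2 = 1 ∧ (a : Fin (2*k+3)).val = (b : Fin (2*k+3)).val + 1) := by
  have h' := Hadj.mp (G2_adj.mp h)
  have hna := nz a
  have hnb := nz b
  omega

lemma loc (k i : ℕ) (hi : i ≤ k) (x : ({w : Fin (2*k+3) | w ≠ v0 k} : Set (Fin (2*k+3))))
    (hx1 : (x : Fin (2*k+3)).val ≠ 2*i+1) (hx2 : (x : Fin (2*k+3)).val ≠ 2*i+2)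
    (U W : ({w : Fin (2*k+3) | w ≠ v0 k} : Set (Fin (2*k+3))))
    (hU : (U : Fin (2*k+3)).val = 2*i+1) (hW : (W : Fin (2*k+3)).val = 2*i+2) :
    ¬ monitors (G2 k) x s(U, W) := by
  rintro ⟨y, hy⟩
  apply hy
  set G' := (G2 k).deleteEdges {s(U,W)} with hG'
  have upper : (G2 k).edist x y ≤ G'.edist x y :=
    SimpleGraph.edist_anti (SimpleGraph.deleteEdges_le _)
  by_cases hreach : (G2 k).Reachable x y
  · -- y lies in the K2-component of x
    have hS : ∀ p q, (G2 k).Adj p q →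
        p ∈ {w : ({w : Fin (2*k+3) | w ≠ v0 k} : Set (Fin (2*k+3))) |
              (w : Fin (2*k+3)).val = (x : Fin (2*k+3)).val ∨
              ((x : Fin (2*k+3)).val % 2 = 1 ∧ (w : Fin (2*k+3)).val = (x : Fin (2*k+3)).val + 1) ∨
              ((x : Fin (2*k+3)).val % 2 = 0 ∧ (w : Fin (2*k+3)).val + 1 = (x : Fin (2*k+3)).val)} →
        q ∈ {w : ({w : Fin (2*k+3) | w ≠ v0 k} : Set (Fin (2*k+3))) |
              (w : Fin (2*k+3)).val = (x : Fin (2*k+3)).val ∨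
              ((x : Fin (2*k+3)).val % 2 = 1 ∧ (w : Fin (2*k+3)).val = (x : Fin (2*k+3)).val + 1) ∨
              ((x : Fin (2*k+3)).val % 2 = 0 ∧ (w : Fin (2*k+3)).val + 1 = (x : Fin (2*k+3)).val)} := by
      intro p q hpq hp
      have hn := nbr hpq
      have h1 := nz p
      have h2 := nz q
      have h3 := nz x
      simp only [Set.mem_setOf_eq] at hp ⊢
      omega
    obtain ⟨p⟩ := hreach
    have hyS := closed_walk hS p (Or.inl rfl)
    simp only [Set.mem_setOf_eq] at hyS
    by_cases hxy : y = x
    · rw [hxy]; simp [SimpleGraph.edist_self]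
    · have hvne : (y : Fin (2*k+3)).val ≠ (x : Fin (2*k+3)).val :=
        fun h => hxy (Subtype.ext (Fin.ext h))
      have h3 := nz x
      have h4 := nz y
      have hadj : (G2 k).Adj x y := G2_adj.mpr (Hadj.mpr (by omega))
      have hne_edge : s((x : ({w : Fin (2*k+3) | w ≠ v0 k} : Set (Fin (2*k+3)))), y) ∉
          ({s(U,W)} : Set (Sym2 _)) := by
        intro h
        simp only [Set.mem_singleton_iff, Sym2.eq_iff] at h
        rcases h with ⟨h1, -⟩ | ⟨h1, -⟩
        · exact hx1 (by rw [h1, hU])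
        · exact hx2 (by rw [h1, hW])
      have hadj' : G'.Adj x y := by
        rw [hG', SimpleGraph.deleteEdges_adj]
        exact ⟨hadj, hne_edge⟩
      rw [SimpleGraph.edist_eq_one_iff_adj.mpr hadj, SimpleGraph.edist_eq_one_iff_adj.mpr hadj']
  · have ht : (G2 k).edist x y = ⊤ :=
      SimpleGraph.edist_eq_top_of_not_reachable hreach
    rw [ht]
    exact (top_le_iff.mp (ht ▸ upper)).symm

lemma demG2_ge (k : ℕ) : k + 1 ≤ dem (G2 k) := by
  have hne : {n | ∃ M : Set ({w : Fin (2*k+3) | w ≠ v0 k} : Set (Fin (2*k+3))),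
      M.ncard = n ∧ IsDEMSet (G2 k) M}.Nonempty :=
    ⟨(Set.univ).ncard, Set.univ, rfl, isDEMSet_univ_s13 _⟩
  obtain ⟨M, hcard, hdem⟩ := Nat.sInf_mem hne
  rw [dem, ← hcard]
  have hUW : ∀ i : Fin (k+1), ∃ x ∈ M,
      (x : Fin (2*k+3)).val = 2*i.val+1 ∨ (x : Fin (2*k+3)).val = 2*i.val+2 := by
    intro i
    have hik : i.val ≤ k := by omega
    set U : ({w : Fin (2*k+3) | w ≠ v0 k} : Set (Fin (2*k+3))) :=
      ⟨⟨2*i.val+1, by omega⟩, fun h => by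
        have := congrArg Fin.val h; simp [v0] at this⟩ with hUdef
    set W : ({w : Fin (2*k+3) | w ≠ v0 k} : Set (Fin (2*k+3))) :=
      ⟨⟨2*i.val+2, by omega⟩, fun h => by
        have := congrArg Fin.val h; simp [v0] at this⟩ with hWdef
    have hUv : (U : Fin (2*k+3)).val = 2*i.val+1 := rfl
    have hWv : (W : Fin (2*k+3)).val = 2*i.val+2 := rfl
    have hedge : s(U, W) ∈ (G2 k).edgeSet := by
      rw [SimpleGraph.mem_edgeSet]
      refine G2_adj.mpr (Hadj.mpr ?_)
      rw [hUv, hWv]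
      omega
    obtain ⟨x, hxM, hxmon⟩ := hdem _ hedge
    refine ⟨x, hxM, ?_⟩
    by_contra h
    push_neg at h
    exact loc k i.val hik x h.1 h.2 U W hUv hWv hxmon
  choose f hfM hfval using hUW
  have hinj : Function.Injective f := by
    intro i j hij
    have hi2 := hfval i
    have hj2 := hfval j
    rw [hij] at hi2
    have : i.val = j.val := by omega
    exact Fin.ext this
  have hcount : k+1 ≤ Nat.card M := by
    calc k+1 = Nat.card (Fin (k+1)) := by simp
    _ ≤ Nat.card M := Nat.card_le_card_of_injective
        (fun i => (⟨f i, hfM i⟩ : M))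
        (fun i j h => hinj (congrArg Subtype.val h))
  rwa [Nat.card_coe_set_eq] at hcount

theorem stmt13 (k : ℕ) (hk : 1 ≤ k) :
    ∃ (n : ℕ) (H : SimpleGraph (Fin n)) (v : Fin n), H.Connected ∧
      dem (SimpleGraph.induce {w | w ≠ v} H) - dem H ≥ k := by
  refine ⟨2*k+3, Hgraph (2*k+3), v0 k, Hconn (by omega), ?_⟩
  have h1 : dem (Hgraph (2*k+3)) ≤ 1 := demH_le_one (by omega)
  have h2 : k + 1 ≤ dem (G2 k) := demG2_ge k
  have h3 : dem (SimpleGraph.induce {w | w ≠ v0 k} (Hgraph (2*k+3))) = dem (G2 k) := rfl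
  rw [ge_iff_le, h3]
  omega
end

section
/- Let G be a connected graph of order n ≥ 2 and v ∈ V(G) such that G \ v contains at least one edge. Then dem(G) - dem(G \ v) ≤ n - 2, with equality if and only if G = K_3. -/
open SimpleGraph

variable {V : Type*}

lemma endpoint_monitors (G : SimpleGraph V) {a b : V} (h : G.Adj a b) :
    monitors G a s(a, b) := by
  refine ⟨b, ?_⟩
  have h1 : G.edist a b = 1 := edist_eq_one_iff_adj.mpr h
  rw [h1]
  intro hc
  have := edist_eq_one_iff_adj.mp hc.symm
  rw [deleteEdges_adj] at this
  exact this.2 (by simp)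

lemma isDEMSet_of_cover (G : SimpleGraph V) (M : Set V)
    (h : ∀ e ∈ G.edgeSet, ∃ x ∈ M, x ∈ e) : IsDEMSet G M := by
  intro e he
  induction e with
  | h a b =>
    obtain ⟨x, hxM, hxe⟩ := h s(a, b) he
    rw [Sym2.mem_iff] at hxe
    rw [mem_edgeSet] at he
    rcases hxe with rfl | rfl
    · exact ⟨x, hxM, endpoint_monitors G he⟩
    · exact ⟨x, hxM, by rw [Sym2.eq_swap]; exact endpoint_monitors G he.symm⟩

lemma dem_le (G : SimpleGraph V) {M : Set V} (h : IsDEMSet G M) :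
    dem G ≤ M.ncard :=
  Nat.sInf_le ⟨M, rfl, h⟩

lemma exists_dem_set (G : SimpleGraph V) :
    ∃ M : Set V, M.ncard = dem G ∧ IsDEMSet G M := by
  have hne : {n | ∃ M : Set V, M.ncard = n ∧ IsDEMSet G M}.Nonempty := by
    refine ⟨(Set.univ : Set V).ncard, Set.univ, rfl, ?_⟩
    exact isDEMSet_of_cover G _ (by
      intro e he
      induction e with
      | h a b => exact ⟨a, Set.mem_univ a, by simp⟩)
  exact Nat.sInf_mem hne

lemma one_le_dem [Fintype V] (G : SimpleGraph V) (h : G.edgeSet.Nonempty) :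
    1 ≤ dem G := by
  by_contra hc
  push_neg at hc
  interval_cases hd : dem G
  obtain ⟨M, hM, hMdem⟩ := exists_dem_set G
  rw [hd] at hM
  have hMe : M = ∅ := (Set.ncard_eq_zero (Set.toFinite M)).mp hM
  obtain ⟨e, he⟩ := h
  obtain ⟨x, hx, -⟩ := hMdem e he
  rw [hMe] at hx
  exact hx

lemma ncard_compl [Fintype V] (s : Set V) :
    (sᶜ : Set V).ncard = Fintype.card V - s.ncard := by
  have h := Set.ncard_add_ncard_compl s
  rw [Nat.card_eq_fintype_card] at h
  omega

lemma dem_le_card_sub_one [Fintype V] (G : SimpleGraph V) (v₀ : V) :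
    dem G ≤ Fintype.card V - 1 := by
  have hcov : IsDEMSet G ({v₀}ᶜ : Set V) := by
    refine isDEMSet_of_cover G _ ?_
    intro e he
    induction e with
    | h a b =>
      rw [mem_edgeSet] at he
      by_cases ha : a = v₀
      · subst ha
        exact ⟨b, by simpa using he.ne', by simp⟩
      · exact ⟨a, by simpa using ha, by simp⟩
  calc dem G ≤ ({v₀}ᶜ : Set V).ncard := dem_le G hcov
    _ = Fintype.card V - 1 := by rw [ncard_compl]; simp

lemma dem_le_card_sub_two [Fintype V] (G : SimpleGraph V) {x y : V}
    (hxy : x ≠ y) (hnadj : ¬ G.Adj x y) : dem G ≤ Fintype.card V - 2 := by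
  have hcov : IsDEMSet G ({x, y}ᶜ : Set V) := by
    refine isDEMSet_of_cover G _ ?_
    intro e he
    induction e with
    | h a b =>
      rw [mem_edgeSet] at he
      by_cases ha : a ∈ ({x, y} : Set V)
      · refine ⟨b, ?_, by simp⟩
        simp only [Set.mem_compl_iff, Set.mem_insert_iff, Set.mem_singleton_iff] at ha ⊢
        rintro (rfl | rfl)
        · rcases ha with rfl | rfl
          · exact he.ne rfl
          · exact hnadj he.symm
        · rcases ha with rfl | rfl
          · exact hnadj he
          · exact he.ne rfl
      · exact ⟨a, ha, by simp⟩
  calc dem G ≤ ({x, y}ᶜ : Set V).ncard := dem_le G hcov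
    _ = Fintype.card V - 2 := by
        rw [ncard_compl, Set.ncard_pair hxy]

lemma two_le_dem_top [Fintype V] [DecidableEq V] (h : 3 ≤ Fintype.card V) :
    2 ≤ dem (⊤ : SimpleGraph V) := by
  obtain ⟨M, hMcard, hM⟩ := exists_dem_set (⊤ : SimpleGraph V)
  rw [← hMcard]
  by_contra hc
  push_neg at hc
  have hedge : (⊤ : SimpleGraph V).edgeSet.Nonempty := by
    have : 1 < Fintype.card V := by omega
    obtain ⟨a, b, hab⟩ := Fintype.exists_pair_of_one_lt_card this
    exact ⟨s(a, b), by simpa [mem_edgeSet] using hab⟩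
  interval_cases hcard : M.ncard
  · obtain ⟨e, he⟩ := hedge
    obtain ⟨z, hz, -⟩ := hM e he
    rw [(Set.ncard_eq_zero (Set.toFinite M)).mp hcard] at hz
    exact hz
  · obtain ⟨x, rfl⟩ := Set.ncard_eq_one.mp hcard
    -- find a, b distinct, both ≠ x
    have hcard2 : 2 ≤ (Finset.univ.erase x).card := by
      rw [Finset.card_erase_of_mem (Finset.mem_univ x), Finset.card_univ]
      omega
    obtain ⟨a, ha, b, hb, hab⟩ := Finset.one_lt_card.mp hcard2
    have hax : a ≠ x := Finset.ne_of_mem_erase ha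
    have hbx : b ≠ x := Finset.ne_of_mem_erase hb
    have heab : s(a, b) ∈ (⊤ : SimpleGraph V).edgeSet := by
      simpa [mem_edgeSet] using hab
    obtain ⟨z, hz, y, hy⟩ := hM s(a, b) heab
    rw [Set.mem_singleton_iff] at hz
    subst hz
    apply hy
    by_cases hyx : y = z
    · subst hyx; rw [edist_self, edist_self]
    · have hadj : ((⊤ : SimpleGraph V).deleteEdges {s(a, b)}).Adj z y := by
        rw [deleteEdges_adj]
        refine ⟨by simpa using (Ne.symm hyx), ?_⟩
        simp only [Set.mem_singleton_iff, Sym2.eq_iff]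
        rintro (⟨rfl, rfl⟩ | ⟨rfl, rfl⟩) <;> simp at hax hbx
      rw [edist_eq_one_iff_adj.mpr hadj,
          edist_eq_one_iff_adj.mpr (show (⊤ : SimpleGraph V).Adj z y by
            simpa using (Ne.symm hyx))]

lemma card_ne_subtype [Fintype V] [DecidableEq V] (v : V) :
    Fintype.card {w : V // w ≠ v} = Fintype.card V - 1 := by
  rw [Fintype.card_subtype_compl, Fintype.card_subtype_eq]

theorem stmt14 [Fintype V] [DecidableEq V] (G : SimpleGraph V) (hG : G.Connected)
    (hn : 2 ≤ Fintype.card V) (v : V)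
    (he : (SimpleGraph.induce {w | w ≠ v} G).edgeSet.Nonempty) :
    dem G - dem (SimpleGraph.induce {w | w ≠ v} G) ≤ Fintype.card V - 2 ∧
    (dem G - dem (SimpleGraph.induce {w | w ≠ v} G) = Fintype.card V - 2 ↔
      Fintype.card V = 3 ∧ G = ⊤) := by
  set G' := SimpleGraph.induce {w | w ≠ v} G with hG'
  set n := Fintype.card V with hndef
  have hm : Fintype.card ↥{w : V | w ≠ v} = n - 1 := card_ne_subtype v
  -- the subtype has at least 2 elements, so n ≥ 3
  have hm2 : 2 ≤ Fintype.card ↥{w : V | w ≠ v} := by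
    obtain ⟨e, heG'⟩ := he
    induction e with
    | h a b =>
      rw [mem_edgeSet] at heG'
      exact Fintype.one_lt_card_iff.mpr ⟨a, b, heG'.ne⟩
  have hn3 : 3 ≤ n := by omega
  have h1 : dem G ≤ n - 1 := dem_le_card_sub_one G v
  have h2 : 1 ≤ dem G' := one_le_dem G' he
  constructor
  · omega
  constructor
  · intro hdiff
    have hGdem : dem G = n - 1 ∧ dem G' = 1 := by omega
    have hGtop : G = ⊤ := by
      by_contra hc
      have : ∃ x y : V, x ≠ y ∧ ¬ G.Adj x y := by
        by_contra hcc
        push_neg at hcc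
        apply hc
        ext x y
        simp only [top_adj]
        exact ⟨fun h => h.ne, fun h => hcc x y h⟩
      obtain ⟨x, y, hxy, hnadj⟩ := this
      have := dem_le_card_sub_two G hxy hnadj
      omega
    refine ⟨?_, hGtop⟩
    -- G' is also complete
    have hG'top : G' = (⊤ : SimpleGraph ↥{w : V | w ≠ v}) := by
      ext a b
      simp only [hG', hGtop, comap_adj, Function.Embedding.coe_subtype, top_adj]
      constructor
      · intro h hab; exact h (congrArg Subtype.val hab)
      · intro h; exact fun hv => h (Subtype.ext hv)
    by_contra hne3
    have hm3 : 3 ≤ Fintype.card ↥{w : V | w ≠ v} := by omega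
    have := two_le_dem_top (V := ↥{w : V | w ≠ v}) hm3
    rw [← hG'top] at this
    omega
  · rintro ⟨hn3', rfl⟩
    have hG'top : G' = (⊤ : SimpleGraph ↥{w : V | w ≠ v}) := by
      ext a b
      simp only [hG', comap_adj, Function.Embedding.coe_subtype, top_adj]
      constructor
      · intro h hab; exact h (congrArg Subtype.val hab)
      · intro h; exact fun hv => h (Subtype.ext hv)
    have hup : dem G' ≤ 1 := by
      have hne : Nonempty ↥{w : V | w ≠ v} := by
        rw [← Fintype.card_pos_iff]; omega
      obtain ⟨w₀⟩ := hne
      have := dem_le_card_sub_one G' w₀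
      omega
    have hG'1 : dem G' = 1 := le_antisymm hup h2
    have hlow : 2 ≤ dem (⊤ : SimpleGraph V) := two_le_dem_top (by omega)
    omega
end

section
/- Let T be a spanning tree of the complete graph K_n (n ≥ 2). Then the restricted DEM number dem(K_n|_T) equals the vertex cover number β(T) of T, and hence 1 ≤ dem(K_n|_T) ≤ ⌊n/2⌋. -/
open SimpleGraph

variable {V : Type*}

lemma aux_path_length_eq_dist {T : SimpleGraph V} (hT : T.IsTree) {r u : V}
    (p : T.Walk r u) (hp : p.IsPath) : p.length = T.dist r u := by
  classical
  obtain ⟨w, hw⟩ := (hT.isConnected r u).exists_walk_length_eq_dist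
  have huniq := isAcyclic_iff_path_unique.mp hT.IsAcyclic
  have heq : (⟨p, hp⟩ : T.Path r u) = ⟨w.bypass, w.bypass_isPath⟩ := huniq _ _
  have h1 : p.length ≤ T.dist r u := by
    have : p.length = w.bypass.length := by
      have := congrArg (fun q : T.Path r u => q.1.length) heq
      simpa using this
    calc p.length = w.bypass.length := this
      _ ≤ w.length := w.length_bypass_le
      _ = _ := hw
  exact le_antisymm h1 (SimpleGraph.dist_le p)

lemma aux_dist_ne {T : SimpleGraph V} (hT : T.IsTree) (r : V) {u v : V}
    (h : T.Adj u v) : T.dist r u ≠ T.dist r v := by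
  classical
  intro hd
  obtain ⟨w⟩ := hT.isConnected r u
  set p := w.bypass with hpdef
  have hp : p.IsPath := w.bypass_isPath
  have hplen : p.length = T.dist r u := aux_path_length_eq_dist hT p hp
  by_cases hv : v ∈ p.support
  · have hq := hp.takeUntil hv
    have hlen : (p.takeUntil v hv).length = T.dist r v :=
      aux_path_length_eq_dist hT _ hq
    have hadd : (p.takeUntil v hv).length + (p.dropUntil v hv).length = p.length := by
      rw [← SimpleGraph.Walk.length_append, SimpleGraph.Walk.take_spec]
    have h0 : (p.dropUntil v hv).length = 0 := by omega
    exact h.ne' (SimpleGraph.Walk.eq_of_length_eq_zero h0)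
  · have hv' : v ∉ p.reverse.support := by
      simpa using hv
    have hq : (SimpleGraph.Walk.cons h.symm p.reverse).IsPath := hp.reverse.cons hv'
    have hq2 : ((SimpleGraph.Walk.cons h.symm p.reverse).reverse).IsPath := hq.reverse
    have hlen : ((SimpleGraph.Walk.cons h.symm p.reverse).reverse).length = T.dist r v :=
      aux_path_length_eq_dist hT _ hq2
    simp [SimpleGraph.Walk.length_reverse, SimpleGraph.Walk.length_cons] at hlen
    omega

lemma aux_monitors_top_iff {x a b : V} (hab : a ≠ b) :
    monitors (⊤ : SimpleGraph V) x s(a, b) ↔ x = a ∨ x = b := by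
  constructor
  · intro ⟨y, hy⟩
    by_contra hx
    push_neg at hx
    apply hy
    rcases eq_or_ne x y with rfl | hxy
    · simp [SimpleGraph.edist_self]
    · have h1 : (⊤ : SimpleGraph V).edist x y = 1 :=
        SimpleGraph.edist_eq_one_iff_adj.mpr (by simpa using hxy)
      have h2 : ((⊤ : SimpleGraph V).deleteEdges {s(a, b)}).edist x y = 1 := by
        rw [SimpleGraph.edist_eq_one_iff_adj]
        simp only [SimpleGraph.deleteEdges_adj, SimpleGraph.top_adj, Set.mem_singleton_iff]
        refine ⟨hxy, ?_⟩
        rw [Sym2.eq_iff]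
        rintro (⟨rfl, rfl⟩ | ⟨rfl, rfl⟩) <;> simp at hx
      rw [h1, h2]
  · have key : ∀ c d : V, c ≠ d →
        monitors (⊤ : SimpleGraph V) c s(c, d) := by
      intro c d hcd
      refine ⟨d, ?_⟩
      have h1 : (⊤ : SimpleGraph V).edist c d = 1 :=
        SimpleGraph.edist_eq_one_iff_adj.mpr (by simpa using hcd)
      have h2 : ¬ ((⊤ : SimpleGraph V).deleteEdges {s(c, d)}).Adj c d := by simp
      rw [h1]
      intro h
      exact h2 (SimpleGraph.edist_eq_one_iff_adj.mp h.symm)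
    rintro (rfl | rfl)
    · exact key x b hab
    · have := key x a hab.symm
      simpa [Sym2.eq_swap] using this

theorem stmt15 [Fintype V] (T : SimpleGraph V) (hT : T.IsTree)
    (hn : 2 ≤ Fintype.card V) :
    sInf {n | ∃ M : Set V, M ⊆ T.support ∧ M.ncard = n ∧
        ∀ e ∈ T.edgeSet, ∃ x ∈ M, monitors (⊤ : SimpleGraph V) x e} =
      sInf {n | ∃ M : Set V, M.ncard = n ∧ ∀ e ∈ T.edgeSet, ∃ v ∈ M, v ∈ e} ∧
    1 ≤ sInf {n | ∃ M : Set V, M ⊆ T.support ∧ M.ncard = n ∧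
        ∀ e ∈ T.edgeSet, ∃ x ∈ M, monitors (⊤ : SimpleGraph V) x e} ∧
    sInf {n | ∃ M : Set V, M ⊆ T.support ∧ M.ncard = n ∧
        ∀ e ∈ T.edgeSet, ∃ x ∈ M, monitors (⊤ : SimpleGraph V) x e} ≤
      Fintype.card V / 2 := by
  classical
  have hadj_ex : ∀ v : V, ∃ w, T.Adj v w := by
    intro v
    obtain ⟨w, hw⟩ := Fintype.exists_ne_of_one_lt_card (by omega) v
    obtain ⟨p⟩ := hT.isConnected v w
    cases p with
    | nil => exact absurd rfl hw.symm
    | cons h _ => exact ⟨_, h⟩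
  have hsupp : T.support = Set.univ := by
    ext v; simpa [SimpleGraph.mem_support] using hadj_ex v
  have hmon : ∀ e ∈ T.edgeSet, ∀ x : V, (monitors (⊤ : SimpleGraph V) x e ↔ x ∈ e) := by
    intro e he x
    induction e with
    | _ a b =>
      have hab : a ≠ b := (T.ne_of_adj (T.mem_edgeSet.mp he))
      rw [aux_monitors_top_iff hab, Sym2.mem_iff]
  have hseteq : {n | ∃ M : Set V, M ⊆ T.support ∧ M.ncard = n ∧
        ∀ e ∈ T.edgeSet, ∃ x ∈ M, monitors (⊤ : SimpleGraph V) x e} =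
      {n | ∃ M : Set V, M.ncard = n ∧ ∀ e ∈ T.edgeSet, ∃ v ∈ M, v ∈ e} := by
    ext n
    constructor
    · rintro ⟨M, _, hcard, hcov⟩
      exact ⟨M, hcard, fun e he => by
        obtain ⟨x, hx, hm⟩ := hcov e he
        exact ⟨x, hx, (hmon e he x).mp hm⟩⟩
    · rintro ⟨M, hcard, hcov⟩
      refine ⟨M, by simp [hsupp], hcard, fun e he => ?_⟩
      obtain ⟨x, hx, hm⟩ := hcov e he
      exact ⟨x, hx, (hmon e he x).mpr hm⟩
  have hne : Nonempty V := Fintype.card_pos_iff.mp (by omega)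
  obtain ⟨r⟩ := hne
  -- parity coloring
  have hpar : ∀ {u v : V}, T.Adj u v →
      (T.dist r u % 2 = 0 ↔ ¬ T.dist r v % 2 = 0) := by
    intro u v h
    have h1 : T.dist u v = 1 := SimpleGraph.dist_eq_one_iff_adj.mpr h
    have h2 : T.dist v u = 1 := SimpleGraph.dist_eq_one_iff_adj.mpr h.symm
    have t1 : T.dist r v ≤ T.dist r u + T.dist u v := hT.isConnected.dist_triangle
    have t2 : T.dist r u ≤ T.dist r v + T.dist v u := hT.isConnected.dist_triangle
    have hne' := aux_dist_ne hT r h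
    omega
  set S : Set V := {v | T.dist r v % 2 = 0} with hS
  have hcov0 : ∀ e ∈ T.edgeSet, ∃ x ∈ S, x ∈ e := by
    intro e he
    induction e with
    | _ a b =>
      have hadj : T.Adj a b := T.mem_edgeSet.mp he
      by_cases ha : T.dist r a % 2 = 0
      · exact ⟨a, ha, by simp⟩
      · exact ⟨b, by have := hpar hadj; simp [hS]; omega, by simp⟩
  have hcov1 : ∀ e ∈ T.edgeSet, ∃ x ∈ Sᶜ, x ∈ e := by
    intro e he
    induction e with
    | _ a b =>
      have hadj : T.Adj a b := T.mem_edgeSet.mp he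
      by_cases ha : T.dist r a % 2 = 0
      · refine ⟨b, ?_, by simp⟩
        have := hpar hadj
        simp [hS, Set.mem_compl_iff]
        omega
      · exact ⟨a, by simpa [hS] using ha, by simp⟩
  have hsum : S.ncard + Sᶜ.ncard = Fintype.card V := by
    rw [Set.ncard_add_ncard_compl, Nat.card_eq_fintype_card]
  obtain ⟨M, hMcard, hMcov⟩ :
      ∃ M : Set V, M.ncard ≤ Fintype.card V / 2 ∧ ∀ e ∈ T.edgeSet, ∃ x ∈ M, x ∈ e := by
    by_cases hle : S.ncard ≤ Fintype.card V / 2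
    · exact ⟨S, hle, hcov0⟩
    · exact ⟨Sᶜ, by omega, hcov1⟩
  have hMmem : M.ncard ∈ {n | ∃ M : Set V, M ⊆ T.support ∧ M.ncard = n ∧
        ∀ e ∈ T.edgeSet, ∃ x ∈ M, monitors (⊤ : SimpleGraph V) x e} := by
    refine ⟨M, by simp [hsupp], rfl, fun e he => ?_⟩
    obtain ⟨x, hx, hm⟩ := hMcov e he
    exact ⟨x, hx, (hmon e he x).mpr hm⟩
  refine ⟨by rw [hseteq], ?_, le_trans (Nat.sInf_le hMmem) hMcard⟩
  rw [Nat.one_le_iff_ne_zero, Ne, Nat.sInf_eq_zero]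
  rintro (⟨N, _, hN0, hNcov⟩ | hemp)
  · have hNe : N = ∅ := (Set.ncard_eq_zero N.toFinite).mp hN0
    obtain ⟨w, hw⟩ := hadj_ex r
    obtain ⟨x, hx, _⟩ := hNcov s(r, w) (T.mem_edgeSet.mpr hw)
    simp [hNe] at hx
  · exact (Set.eq_empty_iff_forall_notMem.mp hemp _ hMmem)
end

section
/- For the complete bipartite graph K_{n,n} (n ≥ 3) and any edge e, dem(K_{n,n} - e) = n = dem(K_{n,n}). -/
open SimpleGraph

variable {V : Type*}

section Aux

open Sum

variable {α β : Type*}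

lemma bip_adj {K : SimpleGraph (α ⊕ β)} (hK : K ≤ completeBipartiteGraph α β)
    {u v : α ⊕ β} (h : K.Adj u v) : u.isLeft = !v.isLeft := by
  have := hK h
  cases u <;> cases v <;> simp_all

lemma bip_walk_even {K : SimpleGraph (α ⊕ β)} (hK : K ≤ completeBipartiteGraph α β)
    {u v : α ⊕ β} (w : K.Walk u v) : Even w.length ↔ u.isLeft = v.isLeft := by
  induction w with
  | nil => simp
  | @cons u b v h p ih =>
    have hb := bip_adj hK h
    rw [SimpleGraph.Walk.length_cons, Nat.even_add_one, ih, hb]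
    cases b <;> cases v <;> simp

lemma exists_ne_ne {n : ℕ} (hn : 3 ≤ n) (u v : Fin n) : ∃ c : Fin n, c ≠ u ∧ c ≠ v := by
  classical
  have h2 : ({u, v} : Finset (Fin n)).card ≤ 2 := by
    refine le_trans (Finset.card_insert_le _ _) ?_
    simp
  have : (({u, v} : Finset (Fin n))ᶜ).Nonempty := by
    rw [← Finset.card_pos, Finset.card_compl, Fintype.card_fin]
    omega
  obtain ⟨c, hc⟩ := this
  simp only [Finset.mem_compl, Finset.mem_insert, Finset.mem_singleton, not_or] at hc
  exact ⟨c, hc.1, hc.2⟩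

lemma edist_eq_two_aux {W : Type*} {K : SimpleGraph W} {x y z : W} (hxy : x ≠ y)
    (hna : ¬K.Adj x y) (h1 : K.Adj x z) (h2 : K.Adj z y) : K.edist x y = 2 := by
  have hle : K.edist x y ≤ 2 := by
    simpa using SimpleGraph.Walk.edist_le (SimpleGraph.Walk.cons h1 h2.toWalk)
  have h0 : K.edist x y ≠ 0 := by simp [hxy]
  have h1' : K.edist x y ≠ 1 := fun h => hna (edist_eq_one_iff_adj.mp h)
  have htop : K.edist x y ≠ ⊤ := by
    intro h; rw [h] at hle; exact (by norm_num : ¬(⊤ : ℕ∞) ≤ 2) hle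
  obtain ⟨d, hd⟩ := WithTop.ne_top_iff_exists.mp htop
  rw [ENat.some_eq_coe] at hd
  rw [← hd] at hle h0 h1' ⊢
  have hd2 : d = 2 := by
    have a1 : d ≤ 2 := by exact_mod_cast (show (d : ℕ∞) ≤ 2 from hle)
    have a2 : d ≠ 0 := by exact_mod_cast (show (d : ℕ∞) ≠ 0 from h0)
    have a3 : d ≠ 1 := by exact_mod_cast (show (d : ℕ∞) ≠ 1 from h1')
    omega
  exact (show (d : ℕ∞) = 2 by exact_mod_cast congrArg (Nat.cast : ℕ → ℕ∞) hd2)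

lemma bip_edist_eq_three {K : SimpleGraph (α ⊕ β)} (hK : K ≤ completeBipartiteGraph α β)
    {x y z w : α ⊕ β} (hside : x.isLeft ≠ y.isLeft) (hna : ¬K.Adj x y)
    (h1 : K.Adj x z) (h2 : K.Adj z w) (h3 : K.Adj w y) : K.edist x y = 3 := by
  have hxy : x ≠ y := fun h => hside (by rw [h])
  have hle : K.edist x y ≤ 3 := by
    simpa using SimpleGraph.Walk.edist_le
      (SimpleGraph.Walk.cons h1 (SimpleGraph.Walk.cons h2 h3.toWalk))
  have h0 : K.edist x y ≠ 0 := by simp [hxy]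
  have h1' : K.edist x y ≠ 1 := fun h => hna (edist_eq_one_iff_adj.mp h)
  have h2' : K.edist x y ≠ 2 := by
    intro h
    obtain ⟨p, hp⟩ := exists_walk_of_edist_ne_top (by rw [h]; exact (by norm_num))
    rw [h] at hp
    have hlen : p.length = 2 := by exact_mod_cast hp
    exact hside ((bip_walk_even hK p).mp (by rw [hlen]; exact even_two))
  have htop : K.edist x y ≠ ⊤ := by
    intro h; rw [h] at hle; exact (by norm_num : ¬(⊤ : ℕ∞) ≤ 3) hle
  obtain ⟨d, hd⟩ := WithTop.ne_top_iff_exists.mp htop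
  rw [ENat.some_eq_coe] at hd
  rw [← hd] at hle h0 h1' h2' ⊢
  have hd3 : d = 3 := by
    have a1 : d ≤ 3 := by exact_mod_cast (show (d : ℕ∞) ≤ 3 from hle)
    have a2 : d ≠ 0 := by exact_mod_cast (show (d : ℕ∞) ≠ 0 from h0)
    have a3 : d ≠ 1 := by exact_mod_cast (show (d : ℕ∞) ≠ 1 from h1')
    have a4 : d ≠ 2 := by exact_mod_cast (show (d : ℕ∞) ≠ 2 from h2')
    omega
  exact (show (d : ℕ∞) = 3 by exact_mod_cast congrArg (Nat.cast : ℕ → ℕ∞) hd3)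

variable {n : ℕ}

lemma notmem_pair {S : Set (Sym2 (Fin n ⊕ Fin n))} {a0 b0 a1 b1 a b : Fin n}
    (hS : S ⊆ {s(inl a0, inr b0), s(inl a1, inr b1)})
    (h0 : a ≠ a0 ∨ b ≠ b0) (h1 : a ≠ a1 ∨ b ≠ b1) : s(inl a, inr b) ∉ S := by
  intro h
  rcases hS h with h' | h' <;> simp_all

lemma K_adj {S : Set (Sym2 (Fin n ⊕ Fin n))} {a b : Fin n} :
    ((completeBipartiteGraph (Fin n) (Fin n)).deleteEdges S).Adj (inl a) (inr b) ↔
      s(inl a, inr b) ∉ S := by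
  simp [deleteEdges_adj]

lemma edist1 {S : Set (Sym2 (Fin n ⊕ Fin n))} {a b : Fin n}
    (hg : s(inl a, inr b) ∉ S) :
    ((completeBipartiteGraph (Fin n) (Fin n)).deleteEdges S).edist (inl a) (inr b) = 1 :=
  edist_eq_one_iff_adj.mpr (K_adj.mpr hg)

lemma edist3 (hn : 3 ≤ n) {S : Set (Sym2 (Fin n ⊕ Fin n))} {a0 b0 a1 b1 a b : Fin n}
    (hS : S ⊆ {s(inl a0, inr b0), s(inl a1, inr b1)}) (hg : s(inl a, inr b) ∈ S) :
    ((completeBipartiteGraph (Fin n) (Fin n)).deleteEdges S).edist (inl a) (inr b) = 3 := by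
  obtain ⟨b', hb0', hb1'⟩ := exists_ne_ne hn b0 b1
  obtain ⟨a', ha0', ha1'⟩ := exists_ne_ne hn a0 a1
  refine bip_edist_eq_three (deleteEdges_le S) (z := inr b') (w := inl a') (by simp)
    (fun h => (K_adj.mp h) hg) (K_adj.mpr (notmem_pair hS (Or.inr hb0') (Or.inr hb1')))
    ?_ (K_adj.mpr (notmem_pair hS (Or.inl ha0') (Or.inl ha1')))
  exact (K_adj.mpr (notmem_pair hS (Or.inl ha0') (Or.inl ha1'))).symm

lemma edist2_left (hn : 3 ≤ n) {S : Set (Sym2 (Fin n ⊕ Fin n))} {a0 b0 a1 b1 a a' : Fin n}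
    (hS : S ⊆ {s(inl a0, inr b0), s(inl a1, inr b1)}) (haa' : a ≠ a') :
    ((completeBipartiteGraph (Fin n) (Fin n)).deleteEdges S).edist (inl a) (inl a') = 2 := by
  obtain ⟨b', hb0', hb1'⟩ := exists_ne_ne hn b0 b1
  refine edist_eq_two_aux (z := inr b') (by simpa using haa') (by simp [deleteEdges_adj])
    (K_adj.mpr (notmem_pair hS (Or.inr hb0') (Or.inr hb1'))) ?_
  exact (K_adj.mpr (notmem_pair hS (Or.inr hb0') (Or.inr hb1'))).symm

lemma edist2_right (hn : 3 ≤ n) {S : Set (Sym2 (Fin n ⊕ Fin n))} {a0 b0 a1 b1 b b' : Fin n}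
    (hS : S ⊆ {s(inl a0, inr b0), s(inl a1, inr b1)}) (hbb' : b ≠ b') :
    ((completeBipartiteGraph (Fin n) (Fin n)).deleteEdges S).edist (inr b) (inr b') = 2 := by
  obtain ⟨a', ha0', ha1'⟩ := exists_ne_ne hn a0 a1
  refine edist_eq_two_aux (z := inl a') (by simpa using hbb') (by simp [deleteEdges_adj])
    (K_adj.mpr (notmem_pair hS (Or.inl ha0') (Or.inl ha1'))).symm ?_
  exact K_adj.mpr (notmem_pair hS (Or.inl ha0') (Or.inl ha1'))

lemma not_monitors (hn : 3 ≤ n) (S₀ : Set (Sym2 (Fin n ⊕ Fin n))) (a0 b0 a1 b1 : Fin n)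
    (hS₀ : S₀ ⊆ {s(inl a0, inr b0)}) {x : Fin n ⊕ Fin n}
    (hx1 : x ≠ inl a1) (hx2 : x ≠ inr b1) :
    ¬ monitors ((completeBipartiteGraph (Fin n) (Fin n)).deleteEdges S₀) x
        s(inl a1, inr b1) := by
  rintro ⟨y, hy⟩
  rw [deleteEdges_deleteEdges] at hy
  have hS : S₀ ⊆ ({s(inl a0, inr b0), s(inl a1, inr b1)} : Set _) :=
    fun g hg => Set.mem_insert_iff.mpr (Or.inl (hS₀ hg))
  have hS' : S₀ ∪ {s(inl a1, inr b1)} ⊆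
      ({s(inl a0, inr b0), s(inl a1, inr b1)} : Set _) :=
    Set.union_subset hS (fun g hg => Set.mem_insert_iff.mpr (Or.inr hg))
  refine hy ?_
  rcases x with a | b
  · have haa1 : a ≠ a1 := fun h => hx1 (by rw [h])
    rcases y with a'' | b
    · by_cases h : a = a''
      · subst h; simp
      · rw [edist2_left hn hS h, edist2_left hn hS' h]
    · by_cases hg : s(inl a, inr b) ∈ S₀
      · rw [edist3 hn hS hg, edist3 hn hS' (Set.mem_union_left _ hg)]
      · have hg' : s(inl a, inr b) ∉ S₀ ∪ {s(inl a1, inr b1)} := by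
          rintro (h | h)
          · exact hg h
          · simp only [Set.mem_singleton_iff] at h
            simp_all
        rw [edist1 hg, edist1 hg']
  · have hbb1 : b ≠ b1 := fun h => hx2 (by rw [h])
    rcases y with a | b''
    · rw [show ((completeBipartiteGraph (Fin n) (Fin n)).deleteEdges S₀).edist (inr b) (inl a)
            = ((completeBipartiteGraph (Fin n) (Fin n)).deleteEdges S₀).edist (inl a) (inr b)
          from edist_comm,
        show ((completeBipartiteGraph (Fin n) (Fin n)).deleteEdges
              (S₀ ∪ {s(inl a1, inr b1)})).edist (inr b) (inl a)
            = ((completeBipartiteGraph (Fin n) (Fin n)).deleteEdges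
              (S₀ ∪ {s(inl a1, inr b1)})).edist (inl a) (inr b)
          from edist_comm]
      by_cases hg : s(inl a, inr b) ∈ S₀
      · rw [edist3 hn hS hg, edist3 hn hS' (Set.mem_union_left _ hg)]
      · have hg' : s(inl a, inr b) ∉ S₀ ∪ {s(inl a1, inr b1)} := by
          rintro (h | h)
          · exact hg h
          · simp only [Set.mem_singleton_iff] at h
            simp_all
        rw [edist1 hg, edist1 hg']
    · by_cases h : b = b''
      · subst h; simp
      · rw [edist2_right hn hS h, edist2_right hn hS' h]

lemma edge_form {g : Sym2 (Fin n ⊕ Fin n)}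
    (hg : g ∈ (completeBipartiteGraph (Fin n) (Fin n)).edgeSet) :
    ∃ a b : Fin n, g = s(inl a, inr b) := by
  induction g using Sym2.ind with
  | _ u v =>
    rw [mem_edgeSet] at hg
    rcases u with a | b <;> rcases v with a' | b'
    · simp at hg
    · exact ⟨a, b', rfl⟩
    · exact ⟨a', b, Sym2.eq_swap⟩
    · simp at hg

lemma cover_of_dem (hn : 3 ≤ n) (S₀ : Set (Sym2 (Fin n ⊕ Fin n))) (a0 b0 : Fin n)
    (hS₀ : S₀ ⊆ {s(inl a0, inr b0)}) {M : Set (Fin n ⊕ Fin n)}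
    (hM : IsDEMSet ((completeBipartiteGraph (Fin n) (Fin n)).deleteEdges S₀) M)
    (a1 b1 : Fin n) (hf : s(inl a1, inr b1) ∉ S₀) : inl a1 ∈ M ∨ inr b1 ∈ M := by
  have hfe : s(inl a1, inr b1) ∈
      ((completeBipartiteGraph (Fin n) (Fin n)).deleteEdges S₀).edgeSet := by
    rw [edgeSet_deleteEdges]
    exact ⟨by simp, hf⟩
  obtain ⟨x, hxM, hmon⟩ := hM _ hfe
  by_contra hc
  push_neg at hc
  have hx1 : x ≠ inl a1 := fun h => hc.1 (h ▸ hxM)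
  have hx2 : x ≠ inr b1 := fun h => hc.2 (h ▸ hxM)
  exact not_monitors hn S₀ a0 b0 a1 b1 hS₀ hx1 hx2 hmon

lemma card_lb (hn : 3 ≤ n) (a0 b0 : Fin n) (M : Set (Fin n ⊕ Fin n))
    (hcov : ∀ a b : Fin n, (a ≠ a0 ∨ b ≠ b0) → inl a ∈ M ∨ inr b ∈ M) :
    n ≤ M.ncard := by
  classical
  set A : Set (Fin n) := {a | inl a ∈ M} with hA_def
  set B : Set (Fin n) := {b | inr b ∈ M} with hB_def
  have hdisj : Disjoint (inl '' A : Set (Fin n ⊕ Fin n)) (inr '' B) := by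
    rw [Set.disjoint_left]
    rintro _ ⟨a, _, rfl⟩ ⟨b, _, hb⟩
    simp at hb
  have hsub : (inl '' A ∪ inr '' B : Set (Fin n ⊕ Fin n)) ⊆ M := by
    rintro z (⟨a, ha, rfl⟩ | ⟨b, hb, rfl⟩)
    · exact ha
    · exact hb
  have hMcard : A.ncard + B.ncard ≤ M.ncard := by
    have h1 := Set.ncard_union_eq hdisj (Set.toFinite _) (Set.toFinite _)
    rw [Set.ncard_image_of_injective _ Sum.inl_injective,
      Set.ncard_image_of_injective _ Sum.inr_injective] at h1
    rw [← h1]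
    exact Set.ncard_le_ncard hsub M.toFinite
  have hcomplA := Set.ncard_add_ncard_compl A
  have hcomplB := Set.ncard_add_ncard_compl B
  rw [Nat.card_eq_fintype_card, Fintype.card_fin] at hcomplA hcomplB
  by_cases hA : Aᶜ = ∅
  · have : A.ncard = n := by
      have : Aᶜ.ncard = 0 := by rw [hA]; simp
      omega
    omega
  by_cases hB : Bᶜ = ∅
  · have : B.ncard = n := by
      have : Bᶜ.ncard = 0 := by rw [hB]; simp
      omega
    omega
  obtain ⟨a', ha'⟩ := Set.nonempty_iff_ne_empty.mpr hA
  obtain ⟨b', hb'⟩ := Set.nonempty_iff_ne_empty.mpr hB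
  have hforce : ∀ a ∈ Aᶜ, ∀ b ∈ Bᶜ, a = a0 ∧ b = b0 := by
    intro a ha b hb
    by_contra hcon
    have h' : a ≠ a0 ∨ b ≠ b0 := by tauto
    rcases hcov a b h' with h | h
    · exact ha h
    · exact hb h
  have hAc : Aᶜ ⊆ {a0} := fun a ha => (hforce a ha b' hb').1
  have hBc : Bᶜ ⊆ {b0} := fun b hb => (hforce a' ha' b hb).2
  have hA1 : Aᶜ.ncard ≤ 1 := by
    simpa using Set.ncard_le_ncard hAc (Set.finite_singleton a0)
  have hB1 : Bᶜ.ncard ≤ 1 := by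
    simpa using Set.ncard_le_ncard hBc (Set.finite_singleton b0)
  omega

lemma ncard_range_inl (n : ℕ) : (Set.range (inl : Fin n → Fin n ⊕ Fin n)).ncard = n := by
  rw [← Set.image_univ, Set.ncard_image_of_injective _ Sum.inl_injective, Set.ncard_univ]
  simp

lemma dem_set_range_inl (S₀ : Set (Sym2 (Fin n ⊕ Fin n))) :
    IsDEMSet ((completeBipartiteGraph (Fin n) (Fin n)).deleteEdges S₀)
      (Set.range (inl : Fin n → Fin n ⊕ Fin n)) := by
  intro g hg
  have hg' := hg
  rw [edgeSet_deleteEdges] at hg'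
  obtain ⟨a, b, rfl⟩ := edge_form hg'.1
  have hadj := (mem_edgeSet _).mp hg
  refine ⟨inl a, Set.mem_range_self a, inr b, ?_⟩
  have h1 : ((completeBipartiteGraph (Fin n) (Fin n)).deleteEdges S₀).edist (inl a) (inr b)
      = 1 := edist_eq_one_iff_adj.mpr hadj
  have h2 : (((completeBipartiteGraph (Fin n) (Fin n)).deleteEdges S₀).deleteEdges
      {s(inl a, inr b)}).edist (inl a) (inr b) ≠ 1 := by
    intro h
    have := edist_eq_one_iff_adj.mp h
    simp [deleteEdges_adj] at this
  rw [h1]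
  exact fun h => h2 h.symm

lemma dem_eq (hn : 3 ≤ n) (S₀ : Set (Sym2 (Fin n ⊕ Fin n))) (a0 b0 : Fin n)
    (hS₀ : S₀ ⊆ {s(inl a0, inr b0)}) :
    dem ((completeBipartiteGraph (Fin n) (Fin n)).deleteEdges S₀) = n := by
  have hmem : n ∈ {k | ∃ M : Set (Fin n ⊕ Fin n), M.ncard = k ∧
      IsDEMSet ((completeBipartiteGraph (Fin n) (Fin n)).deleteEdges S₀) M} :=
    ⟨Set.range inl, ncard_range_inl n, dem_set_range_inl S₀⟩
  refine le_antisymm (Nat.sInf_le hmem) (le_csInf ⟨n, hmem⟩ ?_)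
  rintro k ⟨M, rfl, hM⟩
  refine card_lb hn a0 b0 M (fun a b hab => ?_)
  refine cover_of_dem hn S₀ a0 b0 hS₀ hM a b (fun h => ?_)
  have := hS₀ h
  simp_all

end Aux

theorem stmt18 (n : ℕ) (hn : 3 ≤ n) (e : Sym2 (Fin n ⊕ Fin n))
    (he : e ∈ (completeBipartiteGraph (Fin n) (Fin n)).edgeSet) :
    dem ((completeBipartiteGraph (Fin n) (Fin n)).deleteEdges {e}) = n ∧
    dem (completeBipartiteGraph (Fin n) (Fin n)) = n := by
  obtain ⟨a0, b0, rfl⟩ := edge_form he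
  constructor
  · exact dem_eq hn _ a0 b0 (Set.Subset.refl _)
  · have h := dem_eq hn (∅ : Set (Sym2 (Fin n ⊕ Fin n))) a0 b0 (Set.empty_subset _)
    rwa [deleteEdges_empty] at h
end
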